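/- arXiv:1907.00284 — 3 statements merged into one kernel-verified Lean document; each statement's English description precedes it below -/
import Mathlib

section
/- Let δ be an inaccessible cardinal and suppose that for every C ⊆ V_δ there is κ < δ that is β-C-strong for all β < δ (i.e., δ is Woodin). Then for every sequence of graphs ⟨G_α : α < δ⟩ with each G_α of cardinality less than δ, if for all α ≤ α' < δ there is a graph homomorphism G_{α'} → G_α, then there exists κ < δ and a graph homomorphism G_κ → G_{κ+1}. -/
open FirstOrder

namespace WVP

/-- The type of relation symbols of the language of set theory: a single binary
relation (membership). -/
inductive memRel : ℕ → Type
  | mem : memRel 2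

/-- The first-order language with a single binary relation symbol `∈`. -/
def ZFLang : FirstOrder.Language := ⟨fun _ => Empty, memRel⟩

instance : ZFLang.Structure ZFSet where
  funMap := fun f _ => f.elim
  RelMap := fun r x => match r with | .mem => x 0 ∈ x 1

instance (M : Set ZFSet) : ZFLang.Structure M where
  funMap := fun f _ => f.elim
  RelMap := fun r x => match r with | .mem => (x 0 : ZFSet) ∈ (x 1 : ZFSet)

/-- `M` is a transitive class of ZF-sets. -/
def ClassTransitive (M : Set ZFSet) : Prop := ∀ x ∈ M, ∀ y ∈ x, y ∈ M

/-- `j : V → M` is an elementary embedding of the set-theoretic universe into the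
class `M` (elementary with respect to the language of set theory). -/
def Elementary (M : Set ZFSet) (j : ZFSet → ZFSet) : Prop :=
  ∃ hj : ∀ x, j x ∈ M, ∀ (n : ℕ) (φ : ZFLang.Formula (Fin n)) (v : Fin n → ZFSet),
    φ.Realize v ↔ φ.Realize fun i => (⟨j (v i), hj (v i)⟩ : M)

attribute [local instance] Classical.propDecidable

noncomputable instance (n : ℕ) (F : (Fin n → ZFSet) → ZFSet) : ZFSet.Definable n F :=
  Classical.allZFSetDefinable F

/-- `x` is a (von Neumann) ordinal: a transitive set all of whose elements are
transitive. -/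
def IsOrd (x : ZFSet) : Prop := x.IsTransitive ∧ ∀ y ∈ x, ZFSet.IsTransitive y

/-- Ordinal successor `κ + 1 = κ ∪ {κ}`. -/
def succZ (x : ZFSet) : ZFSet := insert x x

/-- The cumulative hierarchy: `Vlev β = ⋃_{α ∈ β} 𝒫(Vlev α)`, so that for an
ordinal `β`, `Vlev β` is the set `V_β` of all sets of rank less than `β`. -/
noncomputable def Vlev : ZFSet → ZFSet :=
  ZFSet.mem_wf.fix fun β IH =>
    ZFSet.sUnion (ZFSet.image
      (fun α => if h : α ∈ β then ZFSet.powerset (IH α h) else ∅) β)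

/-- `κ` is `β`-`C`-strong: there are a transitive class `M` and an elementary
embedding `j : V → M` with critical point `κ` such that `V_β ⊆ M` and
`j(C ∩ V_β) ∩ V_β = C ∩ V_β`. -/
def BetaCStrong (κ β C : ZFSet) : Prop :=
  ∃ (M : Set ZFSet) (j : ZFSet → ZFSet), ClassTransitive M ∧ Elementary M j ∧
    IsOrd κ ∧ j κ ≠ κ ∧ (∀ α, IsOrd α → α ∈ κ → j α = α) ∧
    (∀ x, x ∈ Vlev β → x ∈ M) ∧
    j (C ∩ Vlev β) ∩ Vlev β = C ∩ Vlev β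

/-- There is a graph homomorphism from the graph `(g, e)` to the graph `(g', e')`. -/
def GraphHom (g e g' e' : ZFSet) : Prop :=
  ∃ f : ZFSet → ZFSet, (∀ x ∈ g, f x ∈ g') ∧
    ∀ x y : ZFSet, ZFSet.pair x y ∈ e → ZFSet.pair (f x) (f y) ∈ e'

/-- `(g, e)` is a graph: `e` is a set of (Kuratowski-coded) pairs from `g`. -/
def IsGraph (g e : ZFSet) : Prop := ∀ z ∈ e, ∃ x ∈ g, ∃ y ∈ g, z = ZFSet.pair x y

/-- `g` has cardinality less than `δ`: `g` injects into some element of `δ`. -/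
def SmallerThan (g δ : ZFSet) : Prop :=
  ∃ γ ∈ δ, ∃ f : ZFSet → ZFSet,
    (∀ x ∈ g, f x ∈ γ) ∧ ∀ x ∈ g, ∀ y ∈ g, f x = f y → x = y

/-- `δ` is a regular ordinal: no function from an element of `δ` has range
unbounded in `δ`. -/
def Regular (δ : ZFSet) : Prop :=
  ∀ γ ∈ δ, ∀ f : ZFSet → ZFSet, (∀ α ∈ γ, f α ∈ δ) → ∃ β ∈ δ, ∀ α ∈ γ, f α ∈ β

/-- `δ` is a strong limit: for every `γ ∈ δ`, the power set of `γ` injects into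
some element of `δ`. -/
def StrongLimit (δ : ZFSet) : Prop :=
  ∀ γ ∈ δ, ∃ β ∈ δ, ∃ f : ZFSet → ZFSet,
    (∀ x ∈ ZFSet.powerset γ, f x ∈ β) ∧
    ∀ x ∈ ZFSet.powerset γ, ∀ y ∈ ZFSet.powerset γ, f x = f y → x = y

/-- `δ` is an inaccessible cardinal: an uncountable regular strong limit ordinal. -/
def Inacc (δ : ZFSet) : Prop :=
  IsOrd δ ∧ ZFSet.omega ∈ δ ∧ Regular δ ∧ StrongLimit δ

/-! ### Ordinal and Vlev infrastructure -/

section OrdLemmas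

lemma isOrd_mem {x y : ZFSet} (hx : IsOrd x) (hy : y ∈ x) : IsOrd y :=
  ⟨hx.2 y hy, fun z hz => hx.2 z (hx.1 y hy hz)⟩

lemma isOrd_trichotomy : ∀ a : ZFSet, IsOrd a → ∀ b : ZFSet, IsOrd b →
    a ∈ b ∨ a = b ∨ b ∈ a := by
  intro a
  induction a using ZFSet.inductionOn with
  | _ a IHa =>
    intro ha b
    induction b using ZFSet.inductionOn with
    | _ b IHb =>
      intro hb
      by_contra h
      push_neg at h
      obtain ⟨hab, hne, hba⟩ := h
      have hsub : b ⊆ a := by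
        intro b' hb'
        rcases IHb b' hb' (isOrd_mem hb hb') with h1 | h1 | h1
        · exact absurd (hb.1 b' hb' h1) hab
        · exact absurd (h1 ▸ hb' : a ∈ b) hab
        · exact h1
      have hsub2 : a ⊆ b := by
        intro c hc
        rcases IHa c hc (isOrd_mem ha hc) b hb with h1 | h1 | h1
        · exact h1
        · exact absurd (h1 ▸ hc) hba
        · exact absurd (ha.1 c hc h1) hba
      exact hne (ZFSet.ext fun z => ⟨fun hz => hsub2 hz, fun hz => hsub hz⟩)

lemma isOrd_mem_or_eq_of_subset {a b : ZFSet} (ha : IsOrd a) (hb : IsOrd b)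
    (hsub : a ⊆ b) : a ∈ b ∨ a = b := by
  rcases isOrd_trichotomy a ha b hb with h | h | h
  · exact Or.inl h
  · exact Or.inr h
  · exact absurd (hsub h) (ZFSet.mem_irrefl b)

lemma mem_succZ {x a : ZFSet} : x ∈ succZ a ↔ x = a ∨ x ∈ a := ZFSet.mem_insert_iff

lemma self_mem_succZ {a : ZFSet} : a ∈ succZ a := mem_succZ.2 (Or.inl rfl)

lemma isOrd_succZ {a : ZFSet} (ha : IsOrd a) : IsOrd (succZ a) := by
  constructor
  · intro y hy
    rcases mem_succZ.1 hy with rfl | hy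
    · exact fun z hz => mem_succZ.2 (Or.inr hz)
    · exact fun z hz => mem_succZ.2 (Or.inr (ha.1 y hy hz))
  · intro y hy
    rcases mem_succZ.1 hy with rfl | hy
    · exact ha.1
    · exact ha.2 y hy

lemma isOrd_empty : IsOrd (∅ : ZFSet) :=
  ⟨fun y hy => absurd hy (ZFSet.notMem_empty y), fun y hy => absurd hy (ZFSet.notMem_empty y)⟩

lemma empty_mem_of_ord {b x : ZFSet} (hb : IsOrd b) (hx : x ∈ b) : (∅ : ZFSet) ∈ b := by
  rcases isOrd_trichotomy ∅ isOrd_empty b hb with h | h | h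
  · exact h
  · exact absurd (h ▸ hx) (ZFSet.notMem_empty x)
  · exact absurd h (ZFSet.notMem_empty b)

lemma succZ_mem_succZ {a b : ZFSet} (ha : IsOrd a) (hb : IsOrd b) (hab : a ∈ b) :
    succZ a ∈ succZ b := by
  have hsub : succZ a ⊆ b := by
    intro x hx
    rcases mem_succZ.1 hx with rfl | hx
    · exact hab
    · exact hb.1 a hab hx
  rcases isOrd_mem_or_eq_of_subset (isOrd_succZ ha) hb hsub with h | h
  · exact mem_succZ.2 (Or.inr h)
  · exact h ▸ self_mem_succZ

/-- An inaccessible `δ` is closed under ordinal successor. -/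
lemma succZ_mem_of_inacc {δ a : ZFSet} (hδ : Inacc δ) (ha2 : a ∈ δ) : succZ a ∈ δ := by
  obtain ⟨hord, homega, hreg, _⟩ := hδ
  have hsub : succZ a ⊆ δ := by
    intro x hx
    rcases mem_succZ.1 hx with rfl | hx
    · exact ha2
    · exact hord.1 a ha2 hx
  rcases isOrd_mem_or_eq_of_subset (isOrd_succZ (isOrd_mem hord ha2)) hord hsub with h | h
  · exact h
  exfalso
  have hone : succZ (∅ : ZFSet) ∈ δ := hord.1 _ homega (ZFSet.omega_succ ZFSet.omega_zero)
  obtain ⟨β, hβδ, hβ⟩ := hreg (succZ ∅) hone (fun _ => a) (fun _ _ => ha2)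
  have haβ : a ∈ β := hβ ∅ self_mem_succZ
  rw [← h] at hβδ
  rcases mem_succZ.1 hβδ with rfl | hβa
  · exact ZFSet.mem_irrefl _ haβ
  · exact ZFSet.mem_irrefl a ((isOrd_mem hord ha2).1 β hβa haβ)

/-- maximum of two ordinals -/
lemma isOrd_max {a b : ZFSet} (ha : IsOrd a) (hb : IsOrd b) :
    ∃ c : ZFSet, IsOrd c ∧ a ⊆ c ∧ b ⊆ c ∧ (c = a ∨ c = b) := by
  rcases isOrd_trichotomy a ha b hb with h | h | h
  · exact ⟨b, hb, hb.1 a h, fun x hx => hx, Or.inr rfl⟩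
  · exact ⟨b, hb, h ▸ fun x hx => hx, fun x hx => hx, Or.inr rfl⟩
  · exact ⟨a, ha, fun x hx => hx, ha.1 b h, Or.inl rfl⟩

end OrdLemmas

section VlevLemmas

lemma Vlev_def (β : ZFSet) : Vlev β = ZFSet.sUnion (ZFSet.image
    (fun α => if h : α ∈ β then ZFSet.powerset (Vlev α) else ∅) β) := by
  show WellFounded.fix _ _ β = _
  rw [WellFounded.fix_eq]
  rfl

lemma mem_Vlev {x β : ZFSet} : x ∈ Vlev β ↔ ∃ α ∈ β, x ⊆ Vlev α := by
  rw [Vlev_def, ZFSet.mem_sUnion]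
  constructor
  · rintro ⟨z, hz, hxz⟩
    rw [ZFSet.mem_image] at hz
    obtain ⟨α, hα, rfl⟩ := hz
    rw [dif_pos hα, ZFSet.mem_powerset] at hxz
    exact ⟨α, hα, hxz⟩
  · rintro ⟨α, hα, hsub⟩
    refine ⟨ZFSet.powerset (Vlev α), ?_, ZFSet.mem_powerset.2 hsub⟩
    rw [ZFSet.mem_image]
    exact ⟨α, hα, dif_pos hα⟩

lemma Vlev_subset_Vlev {α β : ZFSet} (hβ : ZFSet.IsTransitive β) (hαβ : α ∈ β) :
    Vlev α ⊆ Vlev β := by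
  intro x hx
  rw [mem_Vlev] at hx ⊢
  obtain ⟨γ, hγ, hsub⟩ := hx
  exact ⟨γ, hβ α hαβ hγ, hsub⟩

lemma Vlev_transitive {β : ZFSet} (hβ : ZFSet.IsTransitive β) :
    ZFSet.IsTransitive (Vlev β) := by
  intro x hx y hy
  rw [mem_Vlev] at hx
  obtain ⟨γ, hγ, hsub⟩ := hx
  exact Vlev_subset_Vlev hβ hγ (hsub hy)

lemma mem_Vlev_of_subset {x α β : ZFSet} (hsub : x ⊆ Vlev α) (hαβ : α ∈ β) :
    x ∈ Vlev β := mem_Vlev.2 ⟨α, hαβ, hsub⟩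

lemma ord_subset_Vlev : ∀ α : ZFSet, IsOrd α → α ⊆ Vlev α := by
  intro α
  induction α using ZFSet.inductionOn with
  | _ α IH =>
    intro hα ξ hξ
    exact mem_Vlev.2 ⟨ξ, hξ, IH ξ hξ (isOrd_mem hα hξ)⟩

lemma mem_Vlev_of_mem_ord {α β : ZFSet} (hβ : IsOrd β) (hαβ : α ∈ β) : α ∈ Vlev β :=
  mem_Vlev.2 ⟨α, hαβ, ord_subset_Vlev α (isOrd_mem hβ hαβ)⟩

lemma empty_mem_Vlev {β x : ZFSet} (hx : x ∈ β) : (∅ : ZFSet) ∈ Vlev β :=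
  mem_Vlev.2 ⟨x, hx, fun y hy => absurd hy (ZFSet.notMem_empty y)⟩

lemma Vlev_mono {α β : ZFSet} (h : α ⊆ β) : Vlev α ⊆ Vlev β := by
  intro x hx
  rw [mem_Vlev] at hx ⊢
  obtain ⟨γ, hγ, hs⟩ := hx
  exact ⟨γ, h hγ, hs⟩

/-- In `V_δ` for `δ` an ordinal closed under successor, pairs of members are members. -/
lemma pair_mem_Vlev {δ x y : ZFSet} (hδ : IsOrd δ) (hsucc : ∀ a ∈ δ, succZ a ∈ δ)
    (hx : x ∈ Vlev δ) (hy : y ∈ Vlev δ) : ZFSet.pair x y ∈ Vlev δ := by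
  obtain ⟨γ₁, hγ₁, hsub₁⟩ := mem_Vlev.1 hx
  obtain ⟨γ₂, hγ₂, hsub₂⟩ := mem_Vlev.1 hy
  obtain ⟨γ, hγord, hs1, hs2, hor⟩ := isOrd_max (isOrd_mem hδ hγ₁) (isOrd_mem hδ hγ₂)
  have hγδ : γ ∈ δ := by rcases hor with rfl | rfl <;> assumption
  have hxm : x ∈ Vlev (succZ γ) :=
    mem_Vlev.2 ⟨γ, self_mem_succZ, fun z hz => Vlev_mono hs1 (hsub₁ hz)⟩
  have hym : y ∈ Vlev (succZ γ) :=
    mem_Vlev.2 ⟨γ, self_mem_succZ, fun z hz => Vlev_mono hs2 (hsub₂ hz)⟩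
  have hsx : ({x} : ZFSet) ∈ Vlev (succZ (succZ γ)) := by
    refine mem_Vlev.2 ⟨succZ γ, self_mem_succZ, fun z hz => ?_⟩
    rw [ZFSet.mem_singleton] at hz
    exact hz ▸ hxm
  have hsxy : ({x, y} : ZFSet) ∈ Vlev (succZ (succZ γ)) := by
    refine mem_Vlev.2 ⟨succZ γ, self_mem_succZ, fun z hz => ?_⟩
    rcases ZFSet.mem_pair.1 hz with rfl | rfl
    · exact hxm
    · exact hym
  refine mem_Vlev.2 ⟨succZ (succZ γ), hsucc _ (hsucc _ hγδ), fun z hz => ?_⟩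
  rcases ZFSet.mem_pair.1 hz with rfl | rfl
  · exact hsx
  · exact hsxy

end VlevLemmas

/-! ### A small deep-embedded fragment of the language of set theory -/

section PFDef

/-- De Bruijn style formulas over membership/equality. -/
inductive PF : Type
  | mem : ℕ → ℕ → PF
  | eq : ℕ → ℕ → PF
  | imp : PF → PF → PF
  | and : PF → PF → PF
  | or : PF → PF → PF
  | not : PF → PF
  | all : PF → PF
  | ex : PF → PF

/-- Semantics of `PF` over any binary relation `E`. -/
def PF.eval {S : Type*} (E : S → S → Prop) : ℕ → (ℕ → S) → PF → Prop
  | _, v, .mem i j => E (v i) (v j)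
  | _, v, .eq i j => v i = v j
  | n, v, .imp p q => PF.eval E n v p → PF.eval E n v q
  | n, v, .and p q => PF.eval E n v p ∧ PF.eval E n v q
  | n, v, .or p q => PF.eval E n v p ∨ PF.eval E n v q
  | n, v, .not p => ¬ PF.eval E n v p
  | n, v, .all p => ∀ a, PF.eval E (n+1) (Function.update v n a) p
  | n, v, .ex p => ∃ a, PF.eval E (n+1) (Function.update v n a) p

/-- All variables of the formula are `< n`. -/
def PF.cb : ℕ → PF → Prop
  | n, .mem i j => i < n ∧ j < n
  | n, .eq i j => i < n ∧ j < n
  | n, .imp p q => PF.cb n p ∧ PF.cb n q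
  | n, .and p q => PF.cb n p ∧ PF.cb n q
  | n, .or p q => PF.cb n p ∧ PF.cb n q
  | n, .not p => PF.cb n p
  | n, .all p => PF.cb (n+1) p
  | n, .ex p => PF.cb (n+1) p

lemma PF.eval_congr {S : Type*} (E : S → S → Prop) :
    ∀ (p : PF) (n : ℕ) (v w : ℕ → S), PF.cb n p → (∀ k, k < n → v k = w k) →
      (PF.eval E n v p ↔ PF.eval E n w p) := by
  intro p
  induction p with
  | mem i j => intro n v w hc hvw; rw [PF.eval, PF.eval, hvw i hc.1, hvw j hc.2]
  | eq i j => intro n v w hc hvw; rw [PF.eval, PF.eval, hvw i hc.1, hvw j hc.2]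
  | imp p q ih1 ih2 =>
    intro n v w hc hvw
    rw [PF.eval, PF.eval, ih1 n v w hc.1 hvw, ih2 n v w hc.2 hvw]
  | and p q ih1 ih2 =>
    intro n v w hc hvw
    rw [PF.eval, PF.eval, ih1 n v w hc.1 hvw, ih2 n v w hc.2 hvw]
  | or p q ih1 ih2 =>
    intro n v w hc hvw
    rw [PF.eval, PF.eval, ih1 n v w hc.1 hvw, ih2 n v w hc.2 hvw]
  | not p ih =>
    intro n v w hc hvw
    rw [PF.eval, PF.eval, ih n v w hc hvw]
  | all p ih =>
    intro n v w hc hvw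
    rw [PF.eval, PF.eval]
    refine forall_congr' fun a => ih (n+1) _ _ hc fun k hk => ?_
    rcases Nat.lt_or_ge k n with h | h
    · rw [Function.update_of_ne (by omega) a v, Function.update_of_ne (by omega) a w]
      exact hvw k h
    · have : k = n := by omega
      subst this
      rw [Function.update_self, Function.update_self]
  | ex p ih =>
    intro n v w hc hvw
    rw [PF.eval, PF.eval]
    refine exists_congr fun a => ih (n+1) _ _ hc fun k hk => ?_
    rcases Nat.lt_or_ge k n with h | h
    · rw [Function.update_of_ne (by omega) a v, Function.update_of_ne (by omega) a w]
      exact hvw k h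
    · have : k = n := by omega
      subst this
      rw [Function.update_self, Function.update_self]

/-- Compilation into `ZFLang` bounded formulas. -/
def PF.compile : (n : ℕ) → PF → ZFLang.BoundedFormula Empty n
  | n, .mem i j =>
    if h : i < n ∧ j < n then
      Language.BoundedFormula.rel (memRel.mem : ZFLang.Relations 2)
        ![Language.Term.var (Sum.inr ⟨i, h.1⟩), Language.Term.var (Sum.inr ⟨j, h.2⟩)]
    else ⊥
  | n, .eq i j =>
    if h : i < n ∧ j < n then
      Language.Term.bdEqual (Language.Term.var (Sum.inr ⟨i, h.1⟩))
        (Language.Term.var (Sum.inr ⟨j, h.2⟩))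
    else ⊥
  | n, .imp p q => (PF.compile n p).imp (PF.compile n q)
  | n, .and p q => (PF.compile n p) ⊓ (PF.compile n q)
  | n, .or p q => (PF.compile n p) ⊔ (PF.compile n q)
  | n, .not p => ∼(PF.compile n p)
  | n, .all p => (PF.compile (n+1) p).all
  | n, .ex p => (PF.compile (n+1) p).ex

/-- The membership relation induced on a `ZFLang`-structure. -/
def memS (S : Type*) [ZFLang.Structure S] : S → S → Prop :=
  fun a b => Language.Structure.RelMap (L := ZFLang) memRel.mem ![a, b]

lemma PF.realize_compile {S : Type*} [ZFLang.Structure S] :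
    ∀ (p : PF) (n : ℕ) (xs : Fin n → S) (v : ℕ → S),
      PF.cb n p → (∀ k (h : k < n), v k = xs ⟨k, h⟩) →
      ((PF.compile n p).Realize (fun e => e.elim) xs ↔ PF.eval (memS S) n v p) := by
  intro p
  induction p with
  | mem i j =>
    intro n xs v hc hv
    have hc' : i < n ∧ j < n := hc
    rw [PF.compile, dif_pos hc']
    have h1 : ((Language.BoundedFormula.rel (memRel.mem : ZFLang.Relations 2)
        ![Language.Term.var (Sum.inr ⟨i, hc'.1⟩), Language.Term.var (Sum.inr ⟨j, hc'.2⟩)]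
        : ZFLang.BoundedFormula Empty n).Realize
        (fun e : Empty => e.elim) xs)
        = @Language.Structure.RelMap ZFLang S _ 2 memRel.mem ![xs ⟨i, hc'.1⟩, xs ⟨j, hc'.2⟩] := by
      show @Language.Structure.RelMap ZFLang S _ 2 memRel.mem _ = _
      congr 1
      funext k
      fin_cases k <;> rfl
    rw [h1, PF.eval, hv i hc'.1, hv j hc'.2]
    exact Iff.rfl
  | eq i j =>
    intro n xs v hc hv
    have hc' : i < n ∧ j < n := hc
    rw [PF.compile, dif_pos hc', Language.BoundedFormula.realize_bdEqual,
      PF.eval, hv i hc'.1, hv j hc'.2]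
    exact Iff.rfl
  | imp p q ih1 ih2 =>
    intro n xs v hc hv
    rw [PF.compile, Language.BoundedFormula.realize_imp, PF.eval,
      ih1 n xs v hc.1 hv, ih2 n xs v hc.2 hv]
  | and p q ih1 ih2 =>
    intro n xs v hc hv
    rw [PF.compile, Language.BoundedFormula.realize_inf, PF.eval,
      ih1 n xs v hc.1 hv, ih2 n xs v hc.2 hv]
  | or p q ih1 ih2 =>
    intro n xs v hc hv
    rw [PF.compile, Language.BoundedFormula.realize_sup, PF.eval,
      ih1 n xs v hc.1 hv, ih2 n xs v hc.2 hv]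
  | not p ih =>
    intro n xs v hc hv
    rw [PF.compile, Language.BoundedFormula.realize_not, PF.eval, ih n xs v hc hv]
  | all p ih =>
    intro n xs v hc hv
    rw [PF.compile, Language.BoundedFormula.realize_all, PF.eval]
    refine forall_congr' fun a => ih (n+1) (Fin.snoc xs a) (Function.update v n a) hc ?_
    intro k hk
    rcases Nat.lt_or_ge k n with h | h
    · rw [Function.update_of_ne (by omega) a v, hv k h]
      have h2 : (⟨k, hk⟩ : Fin (n+1)) = Fin.castSucc ⟨k, h⟩ := rfl
      rw [h2, Fin.snoc_castSucc]
    · have hkn : k = n := by omega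
      subst hkn
      rw [Function.update_self]
      have h2 : (⟨k, hk⟩ : Fin (k+1)) = Fin.last k := rfl
      rw [h2, Fin.snoc_last]
  | ex p ih =>
    intro n xs v hc hv
    rw [PF.compile, Language.BoundedFormula.realize_ex, PF.eval]
    refine exists_congr fun a => ih (n+1) (Fin.snoc xs a) (Function.update v n a) hc ?_
    intro k hk
    rcases Nat.lt_or_ge k n with h | h
    · rw [Function.update_of_ne (by omega) a v, hv k h]
      have h2 : (⟨k, hk⟩ : Fin (n+1)) = Fin.castSucc ⟨k, h⟩ := rfl
      rw [h2, Fin.snoc_castSucc]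
    · have hkn : k = n := by omega
      subst hkn
      rw [Function.update_self]
      have h2 : (⟨k, hk⟩ : Fin (k+1)) = Fin.last k := rfl
      rw [h2, Fin.snoc_last]

lemma memS_zfset {a b : ZFSet} : memS ZFSet a b ↔ a ∈ b := Iff.rfl

lemma memS_class {M : Set ZFSet} {a b : M} : memS M a b ↔ (a : ZFSet) ∈ (b : ZFSet) := Iff.rfl

/-- The key transfer lemma along an elementary embedding. -/
lemma elementary_transfer {M : Set ZFSet} {j : ZFSet → ZFSet} (hj : ∀ x, j x ∈ M)
    (helem : ∀ (n : ℕ) (φ : ZFLang.Formula (Fin n)) (v : Fin n → ZFSet),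
      φ.Realize v ↔ φ.Realize fun i => (⟨j (v i), hj (v i)⟩ : M))
    (p : PF) (n : ℕ) (hp : PF.cb n p) (v : ℕ → ZFSet) :
    PF.eval (· ∈ ·) n v p ↔
      PF.eval (memS M) n (fun k => ⟨j (v k), hj (v k)⟩) p := by
  classical
  set φ : ZFLang.Formula (Fin n) :=
    Language.Formula.relabel (Sum.elim (fun e => e.elim) id) ((p.compile n).toFormula) with hφ
  have key := helem n φ (fun i : Fin n => v i)
  have h1 : φ.Realize (fun i : Fin n => v i) ↔ PF.eval (memS ZFSet) n v p := by
    rw [hφ, Language.Formula.realize_relabel, Language.BoundedFormula.realize_toFormula]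
    rw [show (((fun i : Fin n => v i) ∘ Sum.elim (fun e : Empty => e.elim) id) ∘ Sum.inl
        : Empty → ZFSet) = (fun e => e.elim) from funext fun e => e.elim]
    exact PF.realize_compile p n _ v hp (fun k h => rfl)
  have h2 : φ.Realize (fun i : Fin n => (⟨j (v i), hj (v i)⟩ : M)) ↔
      PF.eval (memS M) n (fun k => ⟨j (v k), hj (v k)⟩) p := by
    rw [hφ, Language.Formula.realize_relabel, Language.BoundedFormula.realize_toFormula]
    rw [show (((fun i : Fin n => (⟨j (v i), hj (v i)⟩ : M)) ∘
        Sum.elim (fun e : Empty => e.elim) id) ∘ Sum.inl : Empty → M)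
        = (fun e => e.elim) from funext fun e => e.elim]
    exact PF.realize_compile p n _ _ hp (fun k h => rfl)
  have hVZ : PF.eval (memS ZFSet) n v p ↔ PF.eval (· ∈ ·) n v p := Iff.rfl
  rw [← hVZ, ← h1, ← h2]
  exact key

end PFDef

/-! ### Formulas and their semantics -/

section Formulas

variable {S : Type*}

/-- `u` is empty. -/
def EmptySem (E : S → S → Prop) (u : S) : Prop := ∀ t, ¬ E t u

/-- `p` is the Kuratowski pair of `x` and `y`. -/
def PairSem (E : S → S → Prop) (p x y : S) : Prop :=
  ∃ u w, E u p ∧ E w p ∧ (E x u ∧ ∀ t, E t u → t = x) ∧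
    (E x w ∧ E y w ∧ ∀ t, E t w → t = x ∨ t = y) ∧ (∀ z, E z p → z = u ∨ z = w)

/-- The pair of `x` and `y` is a member of `s`. -/
def PairInSem (E : S → S → Prop) (s x y : S) : Prop := ∃ p, E p s ∧ PairSem E p x y

/-- `p = ⟨∅, ⟨a, ⟨v, e⟩⟩⟩`. -/
def GEntrySem (E : S → S → Prop) (p a v e : S) : Prop :=
  ∃ z w w2, EmptySem E z ∧ PairSem E p z w ∧ PairSem E w a w2 ∧ PairSem E w2 v e

/-- `h` is a homomorphism (coded as a set of pairs) from `(v', e')` to `(v, e)`. -/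
def HomSem (E : S → S → Prop) (h v' e' v e : S) : Prop :=
  (∀ x, E x v' → ∃ y, E y v ∧ PairInSem E h x y) ∧
  (∀ x y x' y', PairInSem E h x y → PairInSem E h x' y' →
    PairInSem E e' x x' → PairInSem E e y y')

/-- `x` is transitive and all its members are transitive. -/
def OrdSem (E : S → S → Prop) (x : S) : Prop :=
  ∀ y, E y x → ∀ z, E z y → E z x ∧ ∀ w, E w z → E w y

/-- The main statement: for all graph entries `p, q` in `c` whose indices satisfy
`a ∈ b ∨ a = b` there is a homomorphism from the graph of `q` to the graph of `p`. -/
def PhiSem (E : S → S → Prop) (c : S) : Prop :=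
  ∀ p q a v e b v' e', E p c → E q c → GEntrySem E p a v e → GEntrySem E q b v' e' →
    (E a b ∨ a = b) → ∃ h, HomSem E h v' e' v e

/- formula counterparts -/

def pfEmpty (n u : ℕ) : PF := .all (.not (.mem n u))

def pfIsPair (n p x y : ℕ) : PF :=
  .ex (.ex (.and (.mem n p) (.and (.mem (n+1) p)
    (.and (.and (.mem x n) (.all (.imp (.mem (n+2) n) (.eq (n+2) x))))
    (.and (.and (.mem x (n+1)) (.and (.mem y (n+1))
        (.all (.imp (.mem (n+2) (n+1)) (.or (.eq (n+2) x) (.eq (n+2) y))))))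
      (.all (.imp (.mem (n+2) p) (.or (.eq (n+2) n) (.eq (n+2) (n+1))))))))))

def pfPairIn (n s x y : ℕ) : PF := .ex (.and (.mem n s) (pfIsPair (n+1) n x y))

def pfGEntry (n p a v e : ℕ) : PF :=
  .ex (.ex (.ex (.and (pfEmpty (n+3) n)
    (.and (pfIsPair (n+3) p n (n+1))
    (.and (pfIsPair (n+3) (n+1) a (n+2))
          (pfIsPair (n+3) (n+2) v e))))))

def pfHom (n h v' e' v e : ℕ) : PF :=
  .and (.all (.imp (.mem n v') (.ex (.and (.mem (n+1) v) (pfPairIn (n+2) h n (n+1))))))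
    (.all (.all (.all (.all (.imp (pfPairIn (n+4) h n (n+1))
      (.imp (pfPairIn (n+4) h (n+2) (n+3))
      (.imp (pfPairIn (n+4) e' n (n+2)) (pfPairIn (n+4) e (n+1) (n+3)))))))))

def pfOrd (n x : ℕ) : PF :=
  .all (.imp (.mem n x) (.all (.imp (.mem (n+1) n)
    (.and (.mem (n+1) x) (.all (.imp (.mem (n+2) (n+1)) (.mem (n+2) n)))))))

def pfPhi : PF :=
  .all (.all (.all (.all (.all (.all (.all (.all
    (.imp (.mem 1 0) (.imp (.mem 2 0) (.imp (pfGEntry 9 1 3 4 5)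
      (.imp (pfGEntry 9 2 6 7 8) (.imp (.or (.mem 3 6) (.eq 3 6))
        (.ex (pfHom 10 9 7 8 4 5))))))))))))))

/- update computation helper -/
lemma upd_lt {k n : ℕ} (h : k < n) (v : ℕ → S) (a : S) :
    Function.update v n a k = v k := Function.update_of_ne (by omega) _ _

/- closedness -/
lemma cb_pfEmpty {n u : ℕ} (hu : u < n) : PF.cb n (pfEmpty n u) := by
  simp only [pfEmpty, PF.cb]
  omega

lemma cb_pfIsPair {n p x y : ℕ} (hp : p < n) (hx : x < n) (hy : y < n) :
    PF.cb n (pfIsPair n p x y) := by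
  simp only [pfIsPair, PF.cb]
  omega

lemma cb_pfPairIn {n s x y : ℕ} (hs : s < n) (hx : x < n) (hy : y < n) :
    PF.cb n (pfPairIn n s x y) := by
  simp only [pfPairIn, pfIsPair, PF.cb]
  omega

lemma cb_pfGEntry {n p a v e : ℕ} (hp : p < n) (ha : a < n) (hv : v < n) (he : e < n) :
    PF.cb n (pfGEntry n p a v e) := by
  simp only [pfGEntry, pfEmpty, pfIsPair, PF.cb]
  omega

lemma cb_pfHom {n h v' e' v e : ℕ} (hh : h < n) (hv' : v' < n) (he' : e' < n)
    (hv : v < n) (he : e < n) : PF.cb n (pfHom n h v' e' v e) := by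
  simp only [pfHom, pfPairIn, pfIsPair, PF.cb]
  omega

lemma cb_pfOrd {n x : ℕ} (hx : x < n) : PF.cb n (pfOrd n x) := by
  simp only [pfOrd, PF.cb]
  omega

lemma cb_pfPhi : PF.cb 1 pfPhi := by
  simp only [pfPhi, pfGEntry, pfHom, pfPairIn, pfIsPair, pfEmpty, PF.cb]
  omega

/- evaluation lemmas -/

lemma eval_pfEmpty {E : S → S → Prop} {n u : ℕ} (hu : u < n) (v : ℕ → S) :
    PF.eval E n v (pfEmpty n u) ↔ EmptySem E (v u) := by
  simp (disch := omega) only [pfEmpty, PF.eval, EmptySem, upd_lt, Function.update_self]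

lemma eval_pfIsPair {E : S → S → Prop} {n p x y : ℕ} (hp : p < n) (hx : x < n) (hy : y < n)
    (v : ℕ → S) : PF.eval E n v (pfIsPair n p x y) ↔ PairSem E (v p) (v x) (v y) := by
  simp (disch := omega) only [pfIsPair, PF.eval, PairSem, upd_lt, Function.update_self]

lemma eval_pfPairIn {E : S → S → Prop} {n s x y : ℕ} (hs : s < n) (hx : x < n) (hy : y < n)
    (v : ℕ → S) : PF.eval E n v (pfPairIn n s x y) ↔ PairInSem E (v s) (v x) (v y) := by
  simp (disch := omega) only [pfPairIn, pfIsPair, PF.eval, PairInSem, PairSem, upd_lt,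
    Function.update_self]

lemma eval_pfGEntry {E : S → S → Prop} {n p a v e : ℕ} (hp : p < n) (ha : a < n)
    (hv : v < n) (he : e < n) (w : ℕ → S) :
    PF.eval E n w (pfGEntry n p a v e) ↔ GEntrySem E (w p) (w a) (w v) (w e) := by
  simp (disch := omega) only [pfGEntry, pfEmpty, pfIsPair, PF.eval, GEntrySem, EmptySem,
    PairSem, upd_lt, Function.update_self]

lemma eval_pfHom {E : S → S → Prop} {n h v' e' v e : ℕ} (hh : h < n) (hv' : v' < n)
    (he' : e' < n) (hv : v < n) (he : e < n) (w : ℕ → S) :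
    PF.eval E n w (pfHom n h v' e' v e) ↔ HomSem E (w h) (w v') (w e') (w v) (w e) := by
  simp (disch := omega) only [pfHom, pfPairIn, pfIsPair, PF.eval, HomSem, PairInSem,
    PairSem, upd_lt, Function.update_self]

lemma eval_pfOrd {E : S → S → Prop} {n x : ℕ} (hx : x < n) (v : ℕ → S) :
    PF.eval E n v (pfOrd n x) ↔ OrdSem E (v x) := by
  simp (disch := omega) only [pfOrd, PF.eval, OrdSem, upd_lt, Function.update_self]

lemma eval_pfPhi {E : S → S → Prop} (v : ℕ → S) :
    PF.eval E 1 v pfPhi ↔ PhiSem E (v 0) := by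
  simp (disch := omega) only [pfPhi, pfGEntry, pfHom, pfPairIn, pfIsPair, pfEmpty, PF.eval,
    PhiSem, GEntrySem, HomSem, PairInSem, PairSem, EmptySem, upd_lt, Function.update_self]

end Formulas

/-! ### Characterizations of the semantic predicates over `V` and over a transitive class -/

section Characterizations

lemma emptySem_V {u : ZFSet} : EmptySem (· ∈ ·) u ↔ u = ∅ := by
  rw [ZFSet.eq_empty]
  exact Iff.rfl

lemma pairSem_V {p x y : ZFSet} : PairSem (· ∈ ·) p x y ↔ p = ZFSet.pair x y := by
  constructor
  · rintro ⟨u, w, hup, hwp, ⟨hxu, hu⟩, ⟨hxw, hyw, hw⟩, hp⟩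
    have hu' : u = ({x} : ZFSet) := by
      apply ZFSet.ext
      intro t
      rw [ZFSet.mem_singleton]
      exact ⟨fun ht => hu t ht, fun ht => ht ▸ hxu⟩
    have hw' : w = ({x, y} : ZFSet) := by
      apply ZFSet.ext
      intro t
      rw [ZFSet.mem_pair]
      refine ⟨fun ht => hw t ht, fun ht => ?_⟩
      rcases ht with rfl | rfl
      · exact hxw
      · exact hyw
    apply ZFSet.ext
    intro t
    rw [ZFSet.pair, ZFSet.mem_pair]
    constructor
    · intro ht
      rcases hp t ht with rfl | rfl
      · exact Or.inl hu'
      · exact Or.inr hw'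
    · rintro (rfl | rfl)
      · exact hu' ▸ hup
      · exact hw' ▸ hwp
  · rintro rfl
    refine ⟨{x}, {x, y}, ?_, ?_, ⟨ZFSet.mem_singleton.2 rfl, ?_⟩, ⟨ZFSet.mem_pair.2 (Or.inl rfl),
      ZFSet.mem_pair.2 (Or.inr rfl), ?_⟩, ?_⟩
    · show ({x} : ZFSet) ∈ ZFSet.pair x y
      rw [ZFSet.pair, ZFSet.mem_pair]; exact Or.inl rfl
    · show ({x, y} : ZFSet) ∈ ZFSet.pair x y
      rw [ZFSet.pair, ZFSet.mem_pair]; exact Or.inr rfl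
    · exact fun t ht => ZFSet.mem_singleton.1 ht
    · exact fun t ht => ZFSet.mem_pair.1 ht
    · intro z hz
      have hz' : z ∈ ZFSet.pair x y := hz
      rw [ZFSet.pair, ZFSet.mem_pair] at hz'
      exact hz'

lemma pairInSem_V {s x y : ZFSet} : PairInSem (· ∈ ·) s x y ↔ ZFSet.pair x y ∈ s := by
  constructor
  · rintro ⟨p, hps, hp⟩
    exact (pairSem_V.1 hp) ▸ hps
  · intro h
    exact ⟨ZFSet.pair x y, h, pairSem_V.2 rfl⟩

lemma gEntrySem_V {p a v e : ZFSet} :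
    GEntrySem (· ∈ ·) p a v e ↔ p = ZFSet.pair ∅ (ZFSet.pair a (ZFSet.pair v e)) := by
  constructor
  · rintro ⟨z, w, w2, hz, hp, hw, hw2⟩
    rw [emptySem_V] at hz
    rw [pairSem_V] at hp hw hw2
    rw [hp, hz, hw, hw2]
  · rintro rfl
    exact ⟨∅, ZFSet.pair a (ZFSet.pair v e), ZFSet.pair v e, emptySem_V.2 rfl,
      pairSem_V.2 rfl, pairSem_V.2 rfl, pairSem_V.2 rfl⟩

lemma ordSem_V {x : ZFSet} : OrdSem (· ∈ ·) x ↔ IsOrd x := by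
  constructor
  · intro h
    constructor
    · intro y hy z hz
      exact (h y hy z hz).1
    · intro y hy z hz w hw
      exact (h y hy z hz).2 w hw
  · intro h y hy z hz
    exact ⟨h.1 y hy hz, fun w hw => h.2 y hy z hz hw⟩

/- Absoluteness for a transitive class `M`. -/

variable {M : Set ZFSet} (hM : ClassTransitive M)

lemma emptySem_M (hM : ClassTransitive M) {u : M} :
    EmptySem (memS M) u ↔ (u : ZFSet) = ∅ := by
  constructor
  · intro h
    rw [ZFSet.eq_empty]
    intro y hy
    exact h ⟨y, hM u u.2 y hy⟩ hy
  · intro h t ht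
    rw [memS_class, h] at ht
    exact ZFSet.notMem_empty _ ht

lemma pairSem_M (hM : ClassTransitive M) {p x y : M} :
    PairSem (memS M) p x y ↔ (p : ZFSet) = ZFSet.pair x y := by
  constructor
  · rintro ⟨u, w, hup, hwp, ⟨hxu, hu⟩, ⟨hxw, hyw, hw⟩, hp⟩
    rw [memS_class] at hup hwp hxu hxw hyw
    have hu' : (u : ZFSet) = ({(x : ZFSet)} : ZFSet) := by
      apply ZFSet.ext
      intro t
      rw [ZFSet.mem_singleton]
      refine ⟨fun ht => ?_, fun ht => ht ▸ hxu⟩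
      have htM : t ∈ M := hM u u.2 t ht
      have := hu ⟨t, htM⟩ ht
      exact congrArg Subtype.val this
    have hw' : (w : ZFSet) = ({(x : ZFSet), (y : ZFSet)} : ZFSet) := by
      apply ZFSet.ext
      intro t
      rw [ZFSet.mem_pair]
      refine ⟨fun ht => ?_, fun ht => ?_⟩
      · have htM : t ∈ M := hM w w.2 t ht
        rcases hw ⟨t, htM⟩ ht with h | h
        · exact Or.inl (congrArg Subtype.val h)
        · exact Or.inr (congrArg Subtype.val h)
      · rcases ht with rfl | rfl
        · exact hxw
        · exact hyw
    apply ZFSet.ext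
    intro t
    rw [ZFSet.pair, ZFSet.mem_pair]
    constructor
    · intro ht
      have htM : t ∈ M := hM p p.2 t ht
      rcases hp ⟨t, htM⟩ ht with h | h
      · exact Or.inl (hu' ▸ congrArg Subtype.val h)
      · exact Or.inr (hw' ▸ congrArg Subtype.val h)
    · rintro (rfl | rfl)
      · exact hu' ▸ hup
      · exact hw' ▸ hwp
  · intro hp
    have hsx : ({(x : ZFSet)} : ZFSet) ∈ M := by
      apply hM p p.2
      rw [hp, ZFSet.pair, ZFSet.mem_pair]
      exact Or.inl rfl
    have hdxy : ({(x : ZFSet), (y : ZFSet)} : ZFSet) ∈ M := by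
      apply hM p p.2
      rw [hp, ZFSet.pair, ZFSet.mem_pair]
      exact Or.inr rfl
    refine ⟨⟨{(x : ZFSet)}, hsx⟩, ⟨{(x : ZFSet), (y : ZFSet)}, hdxy⟩, ?_, ?_, ⟨?_, ?_⟩,
      ⟨?_, ?_, ?_⟩, ?_⟩
    · rw [memS_class]
      show ({(x : ZFSet)} : ZFSet) ∈ (p : ZFSet)
      rw [hp, ZFSet.pair, ZFSet.mem_pair]
      exact Or.inl rfl
    · rw [memS_class]
      show ({(x : ZFSet), (y : ZFSet)} : ZFSet) ∈ (p : ZFSet)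
      rw [hp, ZFSet.pair, ZFSet.mem_pair]
      exact Or.inr rfl
    · rw [memS_class]
      exact ZFSet.mem_singleton.2 rfl
    · intro t ht
      rw [memS_class] at ht
      have := ZFSet.mem_singleton.1 ht
      exact Subtype.ext this
    · rw [memS_class]
      exact ZFSet.mem_pair.2 (Or.inl rfl)
    · rw [memS_class]
      exact ZFSet.mem_pair.2 (Or.inr rfl)
    · intro t ht
      rw [memS_class] at ht
      rcases ZFSet.mem_pair.1 ht with h | h
      · exact Or.inl (Subtype.ext h)
      · exact Or.inr (Subtype.ext h)
    · intro z hz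
      rw [memS_class] at hz
      rw [hp, ZFSet.pair, ZFSet.mem_pair] at hz
      rcases hz with h | h
      · exact Or.inl (Subtype.ext h)
      · exact Or.inr (Subtype.ext h)

lemma pairInSem_M (hM : ClassTransitive M) {s x y : M} :
    PairInSem (memS M) s x y ↔ ZFSet.pair x y ∈ (s : ZFSet) := by
  constructor
  · rintro ⟨p, hps, hp⟩
    rw [memS_class] at hps
    exact (pairSem_M hM).1 hp ▸ hps
  · intro h
    exact ⟨⟨ZFSet.pair x y, hM s s.2 _ h⟩, h, (pairSem_M hM).2 rfl⟩

lemma gEntrySem_M (hM : ClassTransitive M) {p a v e : M} :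
    GEntrySem (memS M) p a v e ↔
      (p : ZFSet) = ZFSet.pair ∅ (ZFSet.pair a (ZFSet.pair v e)) := by
  constructor
  · rintro ⟨z, w, w2, hz, hp, hw, hw2⟩
    rw [emptySem_M hM] at hz
    rw [pairSem_M hM] at hp hw hw2
    rw [hp, hz, hw, hw2]
  · intro hp
    have hwM : ZFSet.pair a (ZFSet.pair v e) ∈ M := by
      apply hM _ (hM p p.2 _ _)
      · show ZFSet.pair a (ZFSet.pair v e) ∈ ({∅, ZFSet.pair a (ZFSet.pair v e)} : ZFSet)
        exact ZFSet.mem_pair.2 (Or.inr rfl)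
      · rw [hp, ZFSet.pair, ZFSet.mem_pair]
        exact Or.inr rfl
    have hw2M : ZFSet.pair v e ∈ M := by
      apply hM _ (hM _ hwM _ _)
      · show ZFSet.pair v e ∈ ({(a : ZFSet), ZFSet.pair v e} : ZFSet)
        exact ZFSet.mem_pair.2 (Or.inr rfl)
      · rw [ZFSet.pair, ZFSet.mem_pair]
        exact Or.inr rfl
    have hzM : (∅ : ZFSet) ∈ M := by
      apply hM _ (hM p p.2 _ _)
      · show (∅ : ZFSet) ∈ ({(∅ : ZFSet)} : ZFSet)
        exact ZFSet.mem_singleton.2 rfl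
      · rw [hp, ZFSet.pair, ZFSet.mem_pair]
        exact Or.inl rfl
    refine ⟨⟨∅, hzM⟩, ⟨ZFSet.pair a (ZFSet.pair v e), hwM⟩, ⟨ZFSet.pair v e, hw2M⟩, ?_, ?_, ?_, ?_⟩
    · exact (emptySem_M hM).2 rfl
    · exact (pairSem_M hM).2 hp
    · exact (pairSem_M hM).2 rfl
    · exact (pairSem_M hM).2 rfl

lemma ordSem_M (hM : ClassTransitive M) {x : M} :
    OrdSem (memS M) x ↔ IsOrd (x : ZFSet) := by
  constructor
  · intro h
    constructor
    · intro y hy z hz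
      have hyM : y ∈ M := hM x x.2 y hy
      have hzM : z ∈ M := hM _ hyM z hz
      exact (h ⟨y, hyM⟩ hy ⟨z, hzM⟩ hz).1
    · intro y hy z hz w hw
      have hyM : y ∈ M := hM x x.2 y hy
      have hzM : z ∈ M := hM _ hyM z hz
      have hwM : w ∈ M := hM _ hzM w hw
      exact (h ⟨y, hyM⟩ hy ⟨z, hzM⟩ hz).2 ⟨w, hwM⟩ hw
  · intro h y hy z hz
    rw [memS_class] at hy hz
    exact ⟨h.1 y hy hz, fun w hw => h.2 y hy z hz hw⟩

lemma homSem_M (hM : ClassTransitive M) {h v' e' v e : M} :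
    HomSem (memS M) h v' e' v e →
      HomSem (· ∈ ·) (h : ZFSet) (v' : ZFSet) (e' : ZFSet) (v : ZFSet) (e : ZFSet) := by
  intro ⟨h1, h2⟩
  constructor
  · intro x hx
    have hxM : x ∈ M := hM v' v'.2 x hx
    obtain ⟨y, hyv, hpin⟩ := h1 ⟨x, hxM⟩ hx
    rw [memS_class] at hyv
    rw [pairInSem_M hM] at hpin
    exact ⟨y, hyv, pairInSem_V.2 hpin⟩
  · intro x y x' y' hxy hx'y' he'
    rw [pairInSem_V] at hxy hx'y' he'
    have hpM : ZFSet.pair x y ∈ M := hM _ h.2 _ hxy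
    have hxM : x ∈ M := by
      apply hM _ (hM _ hpM ({x} : ZFSet) _)
      · exact ZFSet.mem_singleton.2 rfl
      · rw [ZFSet.pair, ZFSet.mem_pair]
        exact Or.inl rfl
    have hyM : y ∈ M := by
      apply hM _ (hM _ hpM ({x, y} : ZFSet) _)
      · exact ZFSet.mem_pair.2 (Or.inr rfl)
      · rw [ZFSet.pair, ZFSet.mem_pair]
        exact Or.inr rfl
    have hp'M : ZFSet.pair x' y' ∈ M := hM _ h.2 _ hx'y'
    have hx'M : x' ∈ M := by
      apply hM _ (hM _ hp'M ({x'} : ZFSet) _)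
      · exact ZFSet.mem_singleton.2 rfl
      · rw [ZFSet.pair, ZFSet.mem_pair]
        exact Or.inl rfl
    have hy'M : y' ∈ M := by
      apply hM _ (hM _ hp'M ({x', y'} : ZFSet) _)
      · exact ZFSet.mem_pair.2 (Or.inr rfl)
      · rw [ZFSet.pair, ZFSet.mem_pair]
        exact Or.inr rfl
    have := h2 ⟨x, hxM⟩ ⟨y, hyM⟩ ⟨x', hx'M⟩ ⟨y', hy'M⟩
      ((pairInSem_M hM).2 hxy) ((pairInSem_M hM).2 hx'y') ((pairInSem_M hM).2 he')
    rw [pairInSem_M hM] at this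
    exact pairInSem_V.2 this

end Characterizations

/-! ### Graph predicate, transfers along an elementary embedding -/

section GraphSem

variable {S : Type*}

/-- `(g, e)` is a graph. -/
def GraphSem (E : S → S → Prop) (g e : S) : Prop :=
  ∀ z, E z e → ∃ x y, E x g ∧ E y g ∧ PairSem E z x y

def pfGraph (n g e : ℕ) : PF :=
  .all (.imp (.mem n e) (.ex (.ex (.and (.mem (n+1) g)
    (.and (.mem (n+2) g) (pfIsPair (n+3) n (n+1) (n+2)))))))

lemma cb_pfGraph {n g e : ℕ} (hg : g < n) (he : e < n) : PF.cb n (pfGraph n g e) := by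
  simp only [pfGraph, pfIsPair, PF.cb]
  omega

lemma eval_pfGraph {E : S → S → Prop} {n g e : ℕ} (hg : g < n) (he : e < n) (v : ℕ → S) :
    PF.eval E n v (pfGraph n g e) ↔ GraphSem E (v g) (v e) := by
  simp (disch := omega) only [pfGraph, pfIsPair, PF.eval, GraphSem, PairSem, upd_lt,
    Function.update_self]

lemma graphSem_V {g e : ZFSet} : GraphSem (· ∈ ·) g e ↔ IsGraph g e := by
  constructor
  · intro h z hz
    obtain ⟨x, y, hx, hy, hp⟩ := h z hz
    exact ⟨x, hx, y, hy, pairSem_V.1 hp⟩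
  · intro h z hz
    obtain ⟨x, hx, y, hy, hp⟩ := h z hz
    exact ⟨x, y, hx, hy, pairSem_V.2 hp⟩

lemma graphSem_M {M : Set ZFSet} (hM : ClassTransitive M) {g e : M} :
    GraphSem (memS M) g e → IsGraph (g : ZFSet) (e : ZFSet) := by
  intro h z hz
  have hzM : z ∈ M := hM e e.2 z hz
  obtain ⟨x, y, hx, hy, hp⟩ := h ⟨z, hzM⟩ hz
  rw [memS_class] at hx hy
  exact ⟨x, hx, y, hy, (pairSem_M hM).1 hp⟩

end GraphSem

section Transfers

variable {M : Set ZFSet} {j : ZFSet → ZFSet}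

/-- Environment for two values. -/
private def env2 (x y : ZFSet) : ℕ → ZFSet := fun k => match k with
  | 0 => x
  | _ => y

private def env3 (x y z : ZFSet) : ℕ → ZFSet := fun k => match k with
  | 0 => x
  | 1 => y
  | _ => z

lemma j_mem (hj : ∀ x, j x ∈ M)
    (helem : ∀ (n : ℕ) (φ : ZFLang.Formula (Fin n)) (v : Fin n → ZFSet),
      φ.Realize v ↔ φ.Realize fun i => (⟨j (v i), hj (v i)⟩ : M)) {x y : ZFSet} (h : x ∈ y) : j x ∈ j y := by
  have := (elementary_transfer hj helem (.mem 0 1) 2 ⟨by omega, by omega⟩ (env2 x y)).1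
  rw [PF.eval, PF.eval] at this
  exact this h

lemma j_empty (hj : ∀ x, j x ∈ M)
    (helem : ∀ (n : ℕ) (φ : ZFLang.Formula (Fin n)) (v : Fin n → ZFSet),
      φ.Realize v ↔ φ.Realize fun i => (⟨j (v i), hj (v i)⟩ : M)) (hM : ClassTransitive M) : j ∅ = ∅ := by
  have h0 : PF.eval (· ∈ ·) 1 (env2 ∅ ∅) (pfEmpty 1 0) := by
    rw [eval_pfEmpty (by omega)]
    exact emptySem_V.2 rfl
  have := (elementary_transfer hj helem (pfEmpty 1 0) 1 (cb_pfEmpty (by omega)) (env2 ∅ ∅)).1 h0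
  rw [eval_pfEmpty (by omega)] at this
  exact (emptySem_M hM).1 this

lemma j_pair (hj : ∀ x, j x ∈ M)
    (helem : ∀ (n : ℕ) (φ : ZFLang.Formula (Fin n)) (v : Fin n → ZFSet),
      φ.Realize v ↔ φ.Realize fun i => (⟨j (v i), hj (v i)⟩ : M)) (hM : ClassTransitive M) (x y : ZFSet) :
    j (ZFSet.pair x y) = ZFSet.pair (j x) (j y) := by
  have h0 : PF.eval (· ∈ ·) 3 (env3 (ZFSet.pair x y) x y) (pfIsPair 3 0 1 2) := by
    rw [eval_pfIsPair (by omega) (by omega) (by omega)]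
    exact pairSem_V.2 rfl
  have := (elementary_transfer hj helem _ 3
    (cb_pfIsPair (by omega) (by omega) (by omega)) _).1 h0
  rw [eval_pfIsPair (by omega) (by omega) (by omega)] at this
  exact (pairSem_M hM).1 this

lemma j_ord (hj : ∀ x, j x ∈ M)
    (helem : ∀ (n : ℕ) (φ : ZFLang.Formula (Fin n)) (v : Fin n → ZFSet),
      φ.Realize v ↔ φ.Realize fun i => (⟨j (v i), hj (v i)⟩ : M)) (hM : ClassTransitive M) {κ : ZFSet} (hκ : IsOrd κ) : IsOrd (j κ) := by
  have h0 : PF.eval (· ∈ ·) 1 (env2 κ κ) (pfOrd 1 0) := by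
    rw [eval_pfOrd (by omega)]
    exact ordSem_V.2 hκ
  have := (elementary_transfer hj helem _ 1 (cb_pfOrd (by omega)) _).1 h0
  rw [eval_pfOrd (by omega)] at this
  exact (ordSem_M hM).1 this

lemma j_graph (hj : ∀ x, j x ∈ M)
    (helem : ∀ (n : ℕ) (φ : ZFLang.Formula (Fin n)) (v : Fin n → ZFSet),
      φ.Realize v ↔ φ.Realize fun i => (⟨j (v i), hj (v i)⟩ : M)) (hM : ClassTransitive M) {g e : ZFSet} (h : IsGraph g e) :
    IsGraph (j g) (j e) := by
  have h0 : PF.eval (· ∈ ·) 2 (env2 g e) (pfGraph 2 0 1) := by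
    rw [eval_pfGraph (by omega) (by omega)]
    exact graphSem_V.2 h
  have := (elementary_transfer hj helem _ 2 (cb_pfGraph (by omega) (by omega)) _).1 h0
  rw [eval_pfGraph (by omega) (by omega)] at this
  exact graphSem_M hM this

lemma j_phi (hj : ∀ x, j x ∈ M)
    (helem : ∀ (n : ℕ) (φ : ZFLang.Formula (Fin n)) (v : Fin n → ZFSet),
      φ.Realize v ↔ φ.Realize fun i => (⟨j (v i), hj (v i)⟩ : M)) (hM : ClassTransitive M) {c : ZFSet} (h : PhiSem (· ∈ ·) c) :
    PhiSem (memS M) (⟨j c, hj c⟩ : M) := by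
  have h0 : PF.eval (· ∈ ·) 1 (env2 c c) pfPhi := (eval_pfPhi _).2 h
  have := (elementary_transfer hj helem _ 1 cb_pfPhi _).1 h0
  rw [eval_pfPhi] at this
  exact this

lemma j_crit (hj : ∀ x, j x ∈ M)
    (helem : ∀ (n : ℕ) (φ : ZFLang.Formula (Fin n)) (v : Fin n → ZFSet),
      φ.Realize v ↔ φ.Realize fun i => (⟨j (v i), hj (v i)⟩ : M)) (hM : ClassTransitive M) {κ : ZFSet} (hκ : IsOrd κ) (hjne : j κ ≠ κ)
    (hfix : ∀ α, IsOrd α → α ∈ κ → j α = α) : κ ∈ j κ := by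
  have hjord : IsOrd (j κ) := j_ord hj helem hM hκ
  rcases isOrd_trichotomy (j κ) hjord κ hκ with h | h | h
  · exfalso
    have h2 : j (j κ) ∈ j κ := j_mem hj helem h
    rw [hfix (j κ) hjord h] at h2
    exact ZFSet.mem_irrefl _ h2
  · exact absurd h hjne
  · exact h

end Transfers

section GraphHomLemmas

lemma graphHom_comp {g1 e1 g2 e2 g3 e3 : ZFSet} (h1 : GraphHom g1 e1 g2 e2)
    (h2 : GraphHom g2 e2 g3 e3) : GraphHom g1 e1 g3 e3 := by
  obtain ⟨f1, hf1, hf1e⟩ := h1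
  obtain ⟨f2, hf2, hf2e⟩ := h2
  exact ⟨f2 ∘ f1, fun x hx => hf2 _ (hf1 x hx), fun x y hxy => hf2e _ _ (hf1e x y hxy)⟩

lemma graphHom_j {M : Set ZFSet} {j : ZFSet → ZFSet} (hj : ∀ x, j x ∈ M)
    (helem : ∀ (n : ℕ) (φ : ZFLang.Formula (Fin n)) (v : Fin n → ZFSet),
      φ.Realize v ↔ φ.Realize fun i => (⟨j (v i), hj (v i)⟩ : M))
    (hM : ClassTransitive M) (g e : ZFSet) : GraphHom g e (j g) (j e) := by
  refine ⟨j, fun x hx => j_mem hj helem hx, fun x y hxy => ?_⟩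
  have := j_mem hj helem hxy
  rwa [j_pair hj helem hM] at this

lemma graphHom_of_homSem {h v' e' v e : ZFSet} (hh : HomSem (· ∈ ·) h v' e' v e)
    (hg : IsGraph v' e') : GraphHom v' e' v e := by
  classical
  obtain ⟨h1, h2⟩ := hh
  set f : ZFSet → ZFSet := fun x =>
    if hx : ∃ y, y ∈ v ∧ ZFSet.pair x y ∈ h then hx.choose else ∅ with hf
  have hfp : ∀ x ∈ v', f x ∈ v ∧ ZFSet.pair x (f x) ∈ h := by
    intro x hx
    obtain ⟨y, hyv, hpin⟩ := h1 x hx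
    rw [pairInSem_V] at hpin
    have hex : ∃ y, y ∈ v ∧ ZFSet.pair x y ∈ h := ⟨y, hyv, hpin⟩
    rw [hf]
    simp only [dif_pos hex]
    exact ⟨hex.choose_spec.1, hex.choose_spec.2⟩
  refine ⟨f, fun x hx => (hfp x hx).1, fun x y hxy => ?_⟩
  obtain ⟨x0, hx0, y0, hy0, heq⟩ := hg _ hxy
  obtain ⟨hx1, hy1⟩ := ZFSet.pair_injective heq
  subst hx1
  subst hy1
  have h3 := h2 x (f x) y (f y) (pairInSem_V.2 (hfp x hx0).2) (pairInSem_V.2 (hfp y hy0).2)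
    (pairInSem_V.2 hxy)
  exact pairInSem_V.1 h3

end GraphHomLemmas

/-! ### Collapsing the graphs into `V_δ` -/

section Collapse

universe u v

lemma collapse_exists (δ : ZFSet.{u}) (hδ : Inacc δ) (gV gE : ZFSet.{u} → ZFSet.{v})
    (hGraph : ∀ α ∈ δ, IsGraph (gV α) (gE α))
    (hSmall : ∀ α ∈ δ, SmallerThan (gV α) δ)
    (hBack : ∀ α ∈ δ, ∀ α' ∈ δ, (α ∈ α' ∨ α = α') →
      GraphHom (gV α') (gE α') (gV α) (gE α)) :
    ∃ vv ee : ZFSet.{u} → ZFSet.{u},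
      (∀ α ∈ δ, ZFSet.pair ∅ (ZFSet.pair α (ZFSet.pair (vv α) (ee α))) ∈ Vlev δ) ∧
      (∀ α ∈ δ, IsGraph (vv α) (ee α)) ∧
      (∀ α ∈ δ, GraphHom (gV α) (gE α) (vv α) (ee α)) ∧
      (∀ α ∈ δ, GraphHom (vv α) (ee α) (gV α) (gE α)) ∧
      (∀ α ∈ δ, ∀ α' ∈ δ, (α ∈ α' ∨ α = α') →
        ∃ h, HomSem (· ∈ ·) h (vv α') (ee α') (vv α) (ee α)) := by
  classical
  obtain ⟨hδord, hδω, hδreg, hδsl⟩ := hδ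
  have hsucc : ∀ a ∈ δ, succZ a ∈ δ :=
    fun a ha => succZ_mem_of_inacc ⟨hδord, hδω, hδreg, hδsl⟩ ha
  choose γf hγδ ff hf1 hf2 using hSmall
  let F : ∀ α, α ∈ δ → ZFSet.{v} → ZFSet.{u} := fun α hα z =>
    if hz : ∃ x y, x ∈ gV α ∧ y ∈ gV α ∧ z = ZFSet.pair x y then
      ZFSet.pair (ff α hα hz.choose) (ff α hα hz.choose_spec.choose) else ∅
  have hF : ∀ α (hα : α ∈ δ), ∀ x y, x ∈ gV α → y ∈ gV α →
      F α hα (ZFSet.pair x y) = ZFSet.pair (ff α hα x) (ff α hα y) := by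
    intro α hα x y hx hy
    have hz : ∃ x' y', x' ∈ gV α ∧ y' ∈ gV α ∧ ZFSet.pair x y = ZFSet.pair x' y' :=
      ⟨x, y, hx, hy, rfl⟩
    have h1 : F α hα (ZFSet.pair x y)
        = ZFSet.pair (ff α hα hz.choose) (ff α hα hz.choose_spec.choose) := dif_pos hz
    obtain ⟨hx0, hy0, hzz⟩ := hz.choose_spec.choose_spec
    obtain ⟨h2, h3⟩ := ZFSet.pair_injective hzz
    rw [h1]
    exact congrArg₂ (fun a b => ZFSet.pair (ff α hα a) (ff α hα b)) h2.symm h3.symm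
  let vv : ZFSet.{u} → ZFSet.{u} := fun α =>
    if hα : α ∈ δ then ZFSet.sep (fun y => ∃ x, x ∈ gV α ∧ ff α hα x = y) (γf α hα) else ∅
  let ee : ZFSet.{u} → ZFSet.{u} := fun α =>
    if hα : α ∈ δ then ZFSet.sep (fun w => ∃ z, z ∈ gE α ∧ F α hα z = w)
      (ZFSet.powerset (ZFSet.powerset (γf α hα))) else ∅
  have hvmem : ∀ α (hα : α ∈ δ), ∀ u, u ∈ vv α ↔ ∃ x, x ∈ gV α ∧ ff α hα x = u := by
    intro α hα u
    have h1 : vv α = ZFSet.sep (fun y => ∃ x, x ∈ gV α ∧ ff α hα x = y) (γf α hα) :=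
      dif_pos hα
    rw [h1, ZFSet.mem_sep]
    constructor
    · rintro ⟨_, hx⟩
      exact hx
    · rintro ⟨x, hx, rfl⟩
      exact ⟨hf1 α hα x hx, x, hx, rfl⟩
  have hvsub : ∀ α (hα : α ∈ δ), ∀ u, u ∈ vv α → u ∈ γf α hα := by
    intro α hα u hu
    obtain ⟨x, hx, rfl⟩ := (hvmem α hα u).1 hu
    exact hf1 α hα x hx
  have hemem : ∀ α (hα : α ∈ δ), ∀ w, w ∈ ee α ↔ ∃ z, z ∈ gE α ∧ F α hα z = w := by
    intro α hα w
    have h1 : ee α = ZFSet.sep (fun w => ∃ z, z ∈ gE α ∧ F α hα z = w)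
        (ZFSet.powerset (ZFSet.powerset (γf α hα))) := dif_pos hα
    rw [h1, ZFSet.mem_sep]
    constructor
    · rintro ⟨_, hx⟩
      exact hx
    · rintro ⟨z, hz, rfl⟩
      refine ⟨?_, z, hz, rfl⟩
      obtain ⟨x, hx, y, hy, rfl⟩ := hGraph α hα z hz
      rw [hF α hα x y hx hy]
      refine ZFSet.mem_powerset.2 fun t ht => ZFSet.mem_powerset.2 fun s hs => ?_
      have ht' : t ∈ ({{ff α hα x}, {ff α hα x, ff α hα y}} : ZFSet) := ht
      rcases ZFSet.mem_pair.1 ht' with rfl | rfl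
      · rw [ZFSet.mem_singleton] at hs
        exact hs ▸ hf1 α hα x hx
      · rcases ZFSet.mem_pair.1 hs with rfl | rfl
        · exact hf1 α hα x hx
        · exact hf1 α hα y hy
  have heedge : ∀ α (hα : α ∈ δ), ∀ u w, ZFSet.pair u w ∈ ee α ↔
      ∃ x y, x ∈ gV α ∧ y ∈ gV α ∧ ZFSet.pair x y ∈ gE α ∧
        u = ff α hα x ∧ w = ff α hα y := by
    intro α hα u w
    rw [hemem α hα]
    constructor
    · rintro ⟨z, hz, hFz⟩
      obtain ⟨x, hx, y, hy, rfl⟩ := hGraph α hα z hz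
      rw [hF α hα x y hx hy] at hFz
      obtain ⟨h1, h2⟩ := ZFSet.pair_injective hFz
      exact ⟨x, y, hx, hy, hz, h1.symm, h2.symm⟩
    · rintro ⟨x, y, hx, hy, hz, rfl, rfl⟩
      exact ⟨ZFSet.pair x y, hz, hF α hα x y hx hy⟩
  let gg : ∀ α, α ∈ δ → ZFSet.{u} → ZFSet.{v} := fun α hα u =>
    if hu : ∃ x, x ∈ gV α ∧ ff α hα x = u then hu.choose else ∅
  have hgg : ∀ α (hα : α ∈ δ), ∀ x, x ∈ gV α → gg α hα (ff α hα x) = x := by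
    intro α hα x hx
    have hu : ∃ x', x' ∈ gV α ∧ ff α hα x' = ff α hα x := ⟨x, hx, rfl⟩
    have h1 : gg α hα (ff α hα x) = hu.choose := dif_pos hu
    have h2 := hu.choose_spec
    rw [h1]
    exact hf2 α hα _ h2.1 x hx h2.2
  refine ⟨vv, ee, ?_, ?_, ?_, ?_, ?_⟩
  · -- entries in Vlev δ
    intro α hα
    have hvV : vv α ∈ Vlev δ := by
      refine mem_Vlev.2 ⟨γf α hα, hγδ α hα, fun u hu => ?_⟩
      exact ord_subset_Vlev _ (isOrd_mem hδord (hγδ α hα)) (hvsub α hα u hu)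
    have heV : ee α ∈ Vlev δ := by
      refine mem_Vlev.2 ⟨succZ (succZ (γf α hα)), hsucc _ (hsucc _ (hγδ α hα)),
        fun w hw => ?_⟩
      obtain ⟨z, hz, hFz⟩ := (hemem α hα w).1 hw
      obtain ⟨x, hx, y, hy, rfl⟩ := hGraph α hα z hz
      rw [hF α hα x y hx hy] at hFz
      subst hFz
      have hmemγ : ∀ s, s ∈ γf α hα → s ∈ Vlev (γf α hα) :=
        fun s hs => ord_subset_Vlev _ (isOrd_mem hδord (hγδ α hα)) hs
      refine mem_Vlev.2 ⟨succZ (γf α hα), self_mem_succZ, fun t ht => ?_⟩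
      have ht' : t ∈ ({{ff α hα x}, {ff α hα x, ff α hα y}} : ZFSet) := ht
      rcases ZFSet.mem_pair.1 ht' with rfl | rfl
      · refine mem_Vlev.2 ⟨γf α hα, self_mem_succZ, fun s hs => ?_⟩
        rw [ZFSet.mem_singleton] at hs
        exact hs ▸ hmemγ _ (hf1 α hα x hx)
      · refine mem_Vlev.2 ⟨γf α hα, self_mem_succZ, fun s hs => ?_⟩
        rcases ZFSet.mem_pair.1 hs with rfl | rfl
        · exact hmemγ _ (hf1 α hα x hx)
        · exact hmemγ _ (hf1 α hα y hy)
    have hαV : α ∈ Vlev δ := mem_Vlev_of_mem_ord hδord hα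
    have hEmV : (∅ : ZFSet) ∈ Vlev δ := empty_mem_Vlev hδω
    exact pair_mem_Vlev hδord hsucc hEmV
      (pair_mem_Vlev hδord hsucc hαV (pair_mem_Vlev hδord hsucc hvV heV))
  · -- IsGraph
    intro α hα z hz
    obtain ⟨z0, hz0, hFz⟩ := (hemem α hα z).1 hz
    obtain ⟨x, hx, y, hy, rfl⟩ := hGraph α hα z0 hz0
    rw [hF α hα x y hx hy] at hFz
    exact ⟨ff α hα x, (hvmem α hα _).2 ⟨x, hx, rfl⟩,
      ff α hα y, (hvmem α hα _).2 ⟨y, hy, rfl⟩, hFz.symm⟩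
  · -- forward hom
    intro α hα
    refine ⟨ff α hα, fun x hx => (hvmem α hα _).2 ⟨x, hx, rfl⟩, fun x y hxy => ?_⟩
    obtain ⟨x', hx', y', hy', heq⟩ := hGraph α hα _ hxy
    obtain ⟨h1, h2⟩ := ZFSet.pair_injective heq
    subst h1
    subst h2
    exact (heedge α hα _ _).2 ⟨x, y, hx', hy', hxy, rfl, rfl⟩
  · -- backward hom
    intro α hα
    refine ⟨gg α hα, fun u hu => ?_, fun u w huw => ?_⟩
    · obtain ⟨x, hx, rfl⟩ := (hvmem α hα u).1 hu
      rw [hgg α hα x hx]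
      exact hx
    · obtain ⟨x, y, hx, hy, hz, rfl, rfl⟩ := (heedge α hα u w).1 huw
      rw [hgg α hα x hx, hgg α hα y hy]
      exact hz
  · -- HomSem sets
    intro α hα α' hα' hord
    obtain ⟨F0, hF0v, hF0e⟩ := hBack α hα α' hα' hord
    have hrange : ∀ u, u ∈ vv α' → ff α hα (F0 (gg α' hα' u)) ∈ vv α := by
      intro u hu
      obtain ⟨x0, hx0, rfl⟩ := (hvmem α' hα' u).1 hu
      rw [hgg α' hα' x0 hx0]
      exact (hvmem α hα _).2 ⟨F0 x0, hF0v x0 hx0, rfl⟩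
    have hhmem : ∀ s, s ∈ ZFSet.sep
        (fun s => ∃ u, u ∈ vv α' ∧ s = ZFSet.pair u (ff α hα (F0 (gg α' hα' u))))
        (ZFSet.powerset (ZFSet.powerset (γf α' hα' ∪ γf α hα))) ↔
        ∃ u, u ∈ vv α' ∧ s = ZFSet.pair u (ff α hα (F0 (gg α' hα' u))) := by
      intro s
      rw [ZFSet.mem_sep]
      constructor
      · rintro ⟨_, hx⟩
        exact hx
      · rintro ⟨u, hu, rfl⟩
        refine ⟨?_, u, hu, rfl⟩
        have hu1 : u ∈ γf α' hα' ∪ γf α hα := ZFSet.mem_union.2 (Or.inl (hvsub α' hα' u hu))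
        have hu2 : ff α hα (F0 (gg α' hα' u)) ∈ γf α' hα' ∪ γf α hα :=
          ZFSet.mem_union.2 (Or.inr (hvsub α hα _ (hrange u hu)))
        refine ZFSet.mem_powerset.2 fun t ht => ZFSet.mem_powerset.2 fun s' hs' => ?_
        have ht' : t ∈ ({{u}, {u, ff α hα (F0 (gg α' hα' u))}} : ZFSet) := ht
        rcases ZFSet.mem_pair.1 ht' with rfl | rfl
        · rw [ZFSet.mem_singleton] at hs'
          exact hs' ▸ hu1
        · rcases ZFSet.mem_pair.1 hs' with rfl | rfl
          · exact hu1
          · exact hu2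
    refine ⟨ZFSet.sep
      (fun s => ∃ u, u ∈ vv α' ∧ s = ZFSet.pair u (ff α hα (F0 (gg α' hα' u))))
      (ZFSet.powerset (ZFSet.powerset (γf α' hα' ∪ γf α hα))), ?_, ?_⟩
    · intro x hx
      exact ⟨ff α hα (F0 (gg α' hα' x)), hrange x hx,
        pairInSem_V.2 ((hhmem _).2 ⟨x, hx, rfl⟩)⟩
    · intro x y x' y' h1 h2 h3
      rw [pairInSem_V] at h1 h2 h3
      obtain ⟨u, hu, hequ⟩ := (hhmem _).1 h1
      obtain ⟨hux, huy⟩ := ZFSet.pair_injective hequ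
      subst hux
      obtain ⟨u', hu', hequ'⟩ := (hhmem _).1 h2
      obtain ⟨hux', huy'⟩ := ZFSet.pair_injective hequ'
      subst hux'
      subst huy
      subst huy'
      obtain ⟨a, b, ha, hb, hab, hxa, hxb⟩ := (heedge α' hα' x x').1 h3
      subst hxa
      subst hxb
      rw [hgg α' hα' a ha, hgg α' hα' b hb]
      refine pairInSem_V.2 ((heedge α hα _ _).2
        ⟨F0 a, F0 b, hF0v a ha, hF0v b hb, hF0e a b hab, rfl, rfl⟩)

end Collapse

/-- Let `δ` be an inaccessible cardinal which is Woodin (for every `C ⊆ V_δ` there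
is `κ < δ` that is `β`-`C`-strong for all `β < δ`). Then for every sequence of
graphs `⟨G_α : α < δ⟩` with each `G_α` of cardinality less than `δ`, if for all
`α ≤ α' < δ` there is a graph homomorphism `G_{α'} → G_α`, then there exist `κ < δ`
and a graph homomorphism `G_κ → G_{κ+1}`. -/
theorem woodin_implies_swvp_below (δ : ZFSet) (hδ : Inacc δ)
    (hWoodin : ∀ C : ZFSet, C ⊆ Vlev δ →
      ∃ κ, IsOrd κ ∧ κ ∈ δ ∧ ∀ β, IsOrd β → β ∈ δ → BetaCStrong κ β C)
    (gV gE : ZFSet → ZFSet)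
    (hGraph : ∀ α ∈ δ, IsGraph (gV α) (gE α))
    (hSmall : ∀ α ∈ δ, SmallerThan (gV α) δ)
    (hBack : ∀ α ∈ δ, ∀ α' ∈ δ, (α ∈ α' ∨ α = α') →
      GraphHom (gV α') (gE α') (gV α) (gE α)) :
    ∃ κ ∈ δ, IsOrd κ ∧ GraphHom (gV κ) (gE κ) (gV (succZ κ)) (gE (succZ κ)) := by
  classical
  obtain ⟨hδord, hδω, hδreg, hδsl⟩ := hδ
  have hδ' : Inacc δ := ⟨hδord, hδω, hδreg, hδsl⟩
  have hsucc : ∀ a ∈ δ, succZ a ∈ δ := fun a ha => succZ_mem_of_inacc hδ' ha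
  obtain ⟨vv, ee, hVmem, hIsG, hFwd, hBwd, hHomSem⟩ :=
    collapse_exists δ hδ' gV gE hGraph hSmall hBack
  set ge : ZFSet → ZFSet := fun α => ZFSet.pair ∅ (ZFSet.pair α (ZFSet.pair (vv α) (ee α)))
    with hge
  have hgeEq : ∀ α, ge α = ZFSet.pair ∅ (ZFSet.pair α (ZFSet.pair (vv α) (ee α))) :=
    fun α => rfl
  set C : ZFSet := ZFSet.image ge δ with hC
  have hCsub : C ⊆ Vlev δ := by
    intro z hz
    rw [hC, ZFSet.mem_image] at hz
    obtain ⟨α, hα, rfl⟩ := hz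
    exact hVmem α hα
  obtain ⟨κ, hκord, hκδ, hstrong⟩ := hWoodin C hCsub
  have hκ1δ : succZ κ ∈ δ := hsucc κ hκδ
  obtain ⟨γ1, hγ1, hs1⟩ := mem_Vlev.1 (hVmem κ hκδ)
  obtain ⟨γ2, hγ2, hs2⟩ := mem_Vlev.1 (hVmem _ hκ1δ)
  obtain ⟨γ, hγord, hγs1, hγs2, hγor⟩ :=
    isOrd_max (isOrd_mem hδord hγ1) (isOrd_mem hδord hγ2)
  have hγδ : γ ∈ δ := by rcases hγor with rfl | rfl <;> assumption
  have hβδ : succZ γ ∈ δ := hsucc _ hγδ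
  have hβord : IsOrd (succZ γ) := isOrd_succZ hγord
  have hgeκ : ge κ ∈ Vlev (succZ γ) :=
    mem_Vlev.2 ⟨γ, self_mem_succZ, fun z hz => Vlev_mono hγs1 (hs1 hz)⟩
  have hgeκ1 : ge (succZ κ) ∈ Vlev (succZ γ) :=
    mem_Vlev.2 ⟨γ, self_mem_succZ, fun z hz => Vlev_mono hγs2 (hs2 hz)⟩
  obtain ⟨M, j, hMt, hEl, hκord2, hjne, hfix, hVβ, hCeq⟩ := hstrong (succZ γ) hβord hβδ
  obtain ⟨hj, helem⟩ := hEl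
  set Cβ := C ∩ Vlev (succZ γ) with hCβ
  have hgeC : ∀ α ∈ δ, ge α ∈ C := by
    intro α hα
    rw [hC, ZFSet.mem_image]
    exact ⟨α, hα, rfl⟩
  have hpκ : ge κ ∈ Cβ := ZFSet.mem_inter.2 ⟨hgeC κ hκδ, hgeκ⟩
  have hpκ1 : ge (succZ κ) ∈ Cβ := ZFSet.mem_inter.2 ⟨hgeC _ hκ1δ, hgeκ1⟩
  have hsubj : ∀ z ∈ Cβ, z ∈ j Cβ := by
    intro z hz
    rw [← hCeq] at hz
    exact (ZFSet.mem_inter.1 hz).1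
  -- Φ holds in V of Cβ
  have hPhiV : PhiSem (· ∈ ·) Cβ := by
    intro p q a v e b v' e' hpc hqc hgp hgq hab
    rw [gEntrySem_V] at hgp hgq
    have hpC : p ∈ C := (ZFSet.mem_inter.1 hpc).1
    have hqC : q ∈ C := (ZFSet.mem_inter.1 hqc).1
    rw [hC, ZFSet.mem_image] at hpC hqC
    obtain ⟨α, hα, hpα⟩ := hpC
    obtain ⟨α', hα', hqα⟩ := hqC
    rw [hgeEq α] at hpα
    rw [hgeEq α'] at hqα
    obtain ⟨-, h2⟩ := ZFSet.pair_injective (hpα.trans hgp)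
    obtain ⟨ha1, h3⟩ := ZFSet.pair_injective h2
    obtain ⟨hv1, he1⟩ := ZFSet.pair_injective h3
    obtain ⟨-, h2'⟩ := ZFSet.pair_injective (hqα.trans hgq)
    obtain ⟨hb1, h3'⟩ := ZFSet.pair_injective h2'
    obtain ⟨hv1', he1'⟩ := ZFSet.pair_injective h3'
    subst ha1
    subst hv1
    subst he1
    subst hb1
    subst hv1'
    subst he1'
    exact hHomSem α hα α' hα' hab
  have hPhiM : PhiSem (memS M) (⟨j Cβ, hj Cβ⟩ : M) := j_phi hj helem hMt hPhiV
  -- memberships in M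
  have pairMemM : ∀ x y : ZFSet, ZFSet.pair x y ∈ M → x ∈ M ∧ y ∈ M := by
    intro x y hxy
    have hsx : ({x} : ZFSet) ∈ M := by
      apply hMt _ hxy
      show ({x} : ZFSet) ∈ ({{x}, {x, y}} : ZFSet)
      exact ZFSet.mem_pair.2 (Or.inl rfl)
    have hdxy : ({x, y} : ZFSet) ∈ M := by
      apply hMt _ hxy
      show ({x, y} : ZFSet) ∈ ({{x}, {x, y}} : ZFSet)
      exact ZFSet.mem_pair.2 (Or.inr rfl)
    exact ⟨hMt _ hsx x (ZFSet.mem_singleton.2 rfl), hMt _ hdxy y (ZFSet.mem_pair.2 (Or.inr rfl))⟩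
  have hpκ1M : ge (succZ κ) ∈ M := hVβ _ hgeκ1
  have h0 : ZFSet.pair ∅ (ZFSet.pair (succZ κ) (ZFSet.pair (vv (succZ κ))
      (ee (succZ κ)))) ∈ M := by
    rw [← hgeEq]
    exact hpκ1M
  obtain ⟨-, h1⟩ := pairMemM _ _ h0
  obtain ⟨hsκM, h2⟩ := pairMemM _ _ h1
  obtain ⟨hvM, heM⟩ := pairMemM _ _ h2
  -- q-side facts
  have hjge : j (ge κ) = ZFSet.pair ∅ (ZFSet.pair (j κ)
      (ZFSet.pair (j (vv κ)) (j (ee κ)))) := by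
    rw [hgeEq κ, j_pair hj helem hMt, j_pair hj helem hMt, j_pair hj helem hMt,
      j_empty hj helem hMt]
  have hjκord : IsOrd (j κ) := j_ord hj helem hMt hκord
  have hκjκ : κ ∈ j κ := j_crit hj helem hMt hκord hjne hfix
  have hsucclek : succZ κ ∈ j κ ∨ succZ κ = j κ := by
    apply isOrd_mem_or_eq_of_subset (isOrd_succZ hκord) hjκord
    intro t ht
    rcases mem_succZ.1 ht with rfl | ht'
    · exact hκjκ
    · exact hjκord.1 κ hκjκ ht'
  -- instantiate Φ in M
  obtain ⟨hbar, hHomM⟩ := hPhiM ⟨ge (succZ κ), hpκ1M⟩ ⟨j (ge κ), hj _⟩ ⟨succZ κ, hsκM⟩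
    ⟨vv (succZ κ), hvM⟩ ⟨ee (succZ κ), heM⟩ ⟨j κ, hj κ⟩ ⟨j (vv κ), hj _⟩ ⟨j (ee κ), hj _⟩
    (show ge (succZ κ) ∈ j Cβ from hsubj _ hpκ1)
    (show j (ge κ) ∈ j Cβ from j_mem hj helem hpκ)
    ((gEntrySem_M hMt).2 (by exact hgeEq (succZ κ)))
    ((gEntrySem_M hMt).2 (by exact hjge))
    (by
      rcases hsucclek with h | h
      · exact Or.inl h
      · exact Or.inr (Subtype.ext h))
  have hHomV : HomSem (· ∈ ·) (hbar : ZFSet) (j (vv κ)) (j (ee κ)) (vv (succZ κ))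
      (ee (succZ κ)) := homSem_M hMt hHomM
  have hjIsG : IsGraph (j (vv κ)) (j (ee κ)) := j_graph hj helem hMt (hIsG κ hκδ)
  have hom3 : GraphHom (j (vv κ)) (j (ee κ)) (vv (succZ κ)) (ee (succZ κ)) :=
    graphHom_of_homSem hHomV hjIsG
  exact ⟨κ, hκδ, hκord, graphHom_comp (graphHom_comp (graphHom_comp (hFwd κ hκδ)
    (graphHom_j hj helem hMt (vv κ) (ee κ))) hom3) (hBwd _ hκ1δ)⟩


end WVP
end

section
/- Let h : 𝒫_X → 𝒫_Y be a homomorphism of 𝒫-structures (in particular h preserves ⊆ and the well-foundedness predicate WF). Then the membership relation ∈* on the term model M* is well-founded: there is no sequence ⟨(k_n, b_n, f_n) : n ≥ 1⟩ in M* with (k_{n+1}, b_{n+1}, f_{n+1}) ∈* (k_n, b_n, f_n) for all n. -/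
namespace WVP

/-- `tup X k`: the set of `k`-tuples (as lists) of elements of the ZF-set `X`. -/
def tup (X : ZFSet) (k : ℕ) : Set (List ZFSet) := {l | l.length = k ∧ ∀ z ∈ l, z ∈ X}

/-- `finTup X`: the set of all finite tuples from `X`, i.e. `X^{<ω}`. -/
def finTup (X : ZFSet) : Set (List ZFSet) := {l | ∀ z ∈ l, z ∈ X}

/-- `WFset A`: `A` is well-founded under the reverse of the proper-initial-segment
relation, i.e. there is no infinite chain `a₁ ⊊ a₂ ⊊ ⋯` of elements of `A`. -/
def WFset (A : Set (List ZFSet)) : Prop :=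
  ¬ ∃ g : ℕ → List ZFSet, (∀ n, g n ∈ A) ∧ ∀ n, g n <+: g (n + 1) ∧ g n ≠ g (n + 1)

/-- The coordinate projection `(x₁,…,x_k) ↦ (x_{i₁},…,x_{i_j})` (0-based indices). -/
def proj (is : List ℕ) (l : List ZFSet) : List ZFSet := is.map fun i => l.getD i ∅

/-- The inverse image operator `Proj⁻¹_{k,(i₁,…,i_j)}` of the coordinate projection
`proj is : X^k → X^j`, mapping subsets of `X^j` to subsets of `X^k`. -/
def ProjInv (X : ZFSet) (k : ℕ) (is : List ℕ) (A : Set (List ZFSet)) : Set (List ZFSet) :=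
  {l | l ∈ tup X k ∧ proj is l ∈ A}

/-- The bounded projection operator `BP_k` on subsets of `X^{k+1}`:
`BP_k(A) = {(x₁,…,x_{k+1}) ∈ X^{k+1} : ∃ z ∈ x_{k+1}, (x₁,…,x_k,z) ∈ A}`. -/
def BP (X : ZFSet) (k : ℕ) (A : Set (List ZFSet)) : Set (List ZFSet) :=
  {l | l ∈ tup X (k + 1) ∧ ∃ z, z ∈ l.getLastD ∅ ∧ l.dropLast ++ [z] ∈ A}

/-- A homomorphism of 𝒫-structures `𝒫_X → 𝒫_Y`: a Boolean algebra homomorphism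
`𝒫(X^{<ω}) → 𝒫(Y^{<ω})` sending `X^k` to `Y^k`, preserving the well-foundedness
predicate `WF` (forward direction), and commuting with the inverse-projection
operators `Proj⁻¹` and the bounded projection operators `BP_k`. -/
structure IsPHom (X Y : ZFSet) (h : Set (List ZFSet) → Set (List ZFSet)) : Prop where
  subset_finTup : ∀ A ⊆ finTup X, h A ⊆ finTup Y
  map_inter : ∀ A ⊆ finTup X, ∀ B ⊆ finTup X, h (A ∩ B) = h A ∩ h B
  map_compl : ∀ A ⊆ finTup X, h (finTup X \ A) = finTup Y \ h A
  map_const : ∀ k, h (tup X k) = tup Y k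
  map_wf : ∀ A ⊆ finTup X, WFset A → WFset (h A)
  map_projInv : ∀ (j k : ℕ) (is : List ℕ), is.length = j → (∀ i ∈ is, i < k) →
    ∀ A ⊆ tup X j, h (ProjInv X k is A) = ProjInv Y k is (h A)
  map_bp : ∀ (k : ℕ), ∀ A ⊆ tup X (k + 1), h (BP X k A) = BP Y k (h A)

/-- The term model `M*`: triples `(k, b, f)` with `b ∈ Y^k` and `f : X^k → V`
(represented as a total function on tuples, only its values on `X^k` matter). -/
structure MStar (X Y : ZFSet) where
  k : ℕ
  b : List ZFSet
  hb : b ∈ tup Y k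
  f : List ZFSet → ZFSet

/-- The membership relation `∈*` of the term model:
`(k₁,b₁,f₁) ∈* (k₂,b₂,f₂)` iff `b₁b₂ ∈ h({a₁a₂ : f₁(a₁) ∈ f₂(a₂)})`. -/
def memStar (X Y : ZFSet) (h : Set (List ZFSet) → Set (List ZFSet))
    (p q : MStar X Y) : Prop :=
  p.b ++ q.b ∈ h {l | ∃ a₁ ∈ tup X p.k, ∃ a₂ ∈ tup X q.k, l = a₁ ++ a₂ ∧ p.f a₁ ∈ q.f a₂}

/-- The equality relation `=*` of the term model:
`(k₁,b₁,f₁) =* (k₂,b₂,f₂)` iff `b₁b₂ ∈ h({a₁a₂ : f₁(a₁) = f₂(a₂)})`. -/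
def eqStar (X Y : ZFSet) (h : Set (List ZFSet) → Set (List ZFSet))
    (p q : MStar X Y) : Prop :=
  p.b ++ q.b ∈ h {l | ∃ a₁ ∈ tup X p.k, ∃ a₂ ∈ tup X q.k, l = a₁ ++ a₂ ∧ p.f a₁ = q.f a₂}

/-- "Łoś's theorem holds" for (the interpretations of) an `n`-ary formula, where `P`
is its interpretation in `V` and `Q` its interpretation in the term model `M*`:
for all `(k₁,b₁,f₁),…,(kₙ,bₙ,fₙ)` in `M*`,
`M* ⊨ φ[(k₁,b₁,f₁),…,(kₙ,bₙ,fₙ)]` iff `b₁⋯bₙ ∈ h({a₁⋯aₙ : V ⊨ φ[f₁(a₁),…,fₙ(aₙ)]})`. -/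
def LosHolds (X Y : ZFSet) (h : Set (List ZFSet) → Set (List ZFSet)) (n : ℕ)
    (P : (Fin n → ZFSet) → Prop) (Q : (Fin n → MStar X Y) → Prop) : Prop :=
  ∀ t : Fin n → MStar X Y,
    Q t ↔ (List.ofFn fun i => (t i).b).flatten ∈
      h {l | ∃ a : Fin n → List ZFSet, (∀ i, a i ∈ tup X (t i).k) ∧
        l = (List.ofFn a).flatten ∧ P fun i => (t i).f (a i)}

/-! ### Auxiliary lemmas -/

lemma no_descending {α : Type*} {r : α → α → Prop} (wf : WellFounded r) (F : ℕ → α) :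
    ¬ ∀ n, r (F (n + 1)) (F n) := by
  suffices hkey : ∀ x, ∀ F : ℕ → α, F 0 = x → ¬ ∀ n, r (F (n + 1)) (F n) from hkey (F 0) F rfl
  intro x
  induction x using WellFounded.induction wf with
  | _ x IH =>
    intro F hF0 hF
    exact IH (F 1) (by rw [← hF0]; exact hF 0) (fun n => F (n + 1)) rfl (fun n => hF (n + 1))

lemma tup_subset_finTup {X : ZFSet} {k : ℕ} : tup X k ⊆ finTup X := fun _ hl => hl.2

lemma tup_append {X : ZFSet} {j k : ℕ} {l₁ l₂ : List ZFSet}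
    (h₁ : l₁ ∈ tup X j) (h₂ : l₂ ∈ tup X k) : l₁ ++ l₂ ∈ tup X (j + k) := by
  refine ⟨by simp [h₁.1, h₂.1], ?_⟩
  intro z hz
  rcases List.mem_append.1 hz with hz | hz
  exacts [h₁.2 z hz, h₂.2 z hz]

lemma tup_take {X : ZFSet} {k j : ℕ} {l : List ZFSet} (hl : l ∈ tup X k) (hj : j ≤ k) :
    l.take j ∈ tup X j :=
  ⟨by simp [hl.1]; omega, fun z hz => hl.2 z (List.take_subset j l hz)⟩

lemma tup_drop {X : ZFSet} {k j : ℕ} {l : List ZFSet} (hl : l ∈ tup X k) :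
    l.drop j ∈ tup X (k - j) :=
  ⟨by simp [hl.1], fun z hz => hl.2 z (List.drop_subset j l hz)⟩

lemma tup_dropLast {X : ZFSet} {k : ℕ} {l : List ZFSet} (hl : l ∈ tup X (k + 1)) :
    l.dropLast ∈ tup X k :=
  ⟨by simp [hl.1], fun z hz => hl.2 z ((List.dropLast_sublist l).subset hz)⟩

lemma mem_tup_zero {X : ZFSet} {l : List ZFSet} (hl : l ∈ tup X 0) : l = [] :=
  List.length_eq_zero_iff.1 hl.1

lemma dropLast_eq_take_of_tup {X : ZFSet} {k : ℕ} {l : List ZFSet} (hl : l ∈ tup X (k + 1)) :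
    l.dropLast = l.take k := by
  rw [List.dropLast_eq_take, hl.1]
  norm_num

lemma IsPHom.map_empty {X Y : ZFSet} {h : Set (List ZFSet) → Set (List ZFSet)}
    (hh : IsPHom X Y h) : h ∅ = ∅ := by
  have h1 : finTup X ∩ (finTup X \ finTup X) = (∅ : Set (List ZFSet)) := by simp
  have h2 := hh.map_inter (finTup X) subset_rfl (finTup X \ finTup X) Set.diff_subset
  rw [h1, hh.map_compl (finTup X) subset_rfl] at h2
  rw [h2, Set.inter_diff_self]

lemma IsPHom.mono {X Y : ZFSet} {h : Set (List ZFSet) → Set (List ZFSet)}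
    (hh : IsPHom X Y h) {A B : Set (List ZFSet)} (hB : B ⊆ finTup X) (hAB : A ⊆ B) :
    h A ⊆ h B := by
  have hA : A ∩ B = A := Set.inter_eq_left.2 hAB
  calc h A = h (A ∩ B) := by rw [hA]
    _ = h A ∩ h B := hh.map_inter A (hAB.trans hB) B hB
    _ ⊆ h B := Set.inter_subset_right

/-! ### Segments and projections -/

def seg (d j : ℕ) : List ℕ := (List.range j).map (· + d)

lemma seg_length (d j : ℕ) : (seg d j).length = j := by simp [seg]

lemma seg_lt {d j i : ℕ} (hi : i ∈ seg d j) : i < d + j := by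
  simp only [seg, List.mem_map, List.mem_range] at hi
  obtain ⟨a, ha, rfl⟩ := hi
  omega

lemma proj_append (is₁ is₂ : List ℕ) (l : List ZFSet) :
    proj (is₁ ++ is₂) l = proj is₁ l ++ proj is₂ l := List.map_append

lemma proj_seg (d j : ℕ) (l : List ZFSet) (hdj : d + j ≤ l.length) :
    proj (seg d j) l = (l.drop d).take j := by
  apply List.ext_getElem
  · simp [proj, seg]; omega
  · intro i h1 h2
    simp only [proj, seg, List.map_map, List.getElem_map, List.getElem_range,
      Function.comp_apply, List.getElem_take, List.getElem_drop]
    rw [List.getD_eq_getElem l ∅ (by simp [proj, seg] at h1; omega)]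
    congr 1
    omega

/-! ### The cumulative chain sets -/

variable {X Y : ZFSet}

def Sset (g : ℕ → MStar X Y) (n : ℕ) : Set (List ZFSet) :=
  {l | ∃ a₁ ∈ tup X (g (n + 1)).k, ∃ a₂ ∈ tup X (g n).k,
    l = a₁ ++ a₂ ∧ (g (n + 1)).f a₁ ∈ (g n).f a₂}

lemma Sset_subset (g : ℕ → MStar X Y) (n : ℕ) :
    Sset g n ⊆ tup X ((g (n + 1)).k + (g n).k) := by
  rintro l ⟨a₁, h₁, a₂, h₂, rfl, -⟩
  exact tup_append h₁ h₂

def Psum (g : ℕ → MStar X Y) (n : ℕ) : ℕ := ∑ i ∈ Finset.range n, (g i).k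

lemma Psum_succ (g : ℕ → MStar X Y) (n : ℕ) : Psum g (n + 1) = Psum g n + (g n).k :=
  Finset.sum_range_succ _ n

lemma Psum_zero (g : ℕ → MStar X Y) : Psum g 0 = 0 := rfl

lemma Psum_le (g : ℕ → MStar X Y) {m n : ℕ} (hmn : m ≤ n) : Psum g m ≤ Psum g n :=
  Finset.sum_le_sum_of_subset (Finset.range_subset_range.2 hmn)

def Cset (g : ℕ → MStar X Y) : ℕ → Set (List ZFSet)
  | 0 => tup X (Psum g 1)
  | n + 1 =>
      ProjInv X (Psum g (n + 2)) (seg 0 (Psum g (n + 1))) (Cset g n) ∩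
      ProjInv X (Psum g (n + 2))
        (seg (Psum g (n + 1)) ((g (n + 1)).k) ++ seg (Psum g n) ((g n).k)) (Sset g n)

lemma Cset_subset (g : ℕ → MStar X Y) : ∀ n, Cset g n ⊆ tup X (Psum g (n + 1))
  | 0 => subset_rfl
  | n + 1 => fun _ hl => hl.1.1

def cc (g : ℕ → MStar X Y) : ℕ → List ZFSet
  | 0 => (g 0).b
  | n + 1 => cc g n ++ (g (n + 1)).b

def slice (g : ℕ → MStar X Y) (m : ℕ) (l : List ZFSet) : List ZFSet :=
  (l.drop (Psum g m)).take ((g m).k)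

lemma cc_mem_tup (g : ℕ → MStar X Y) : ∀ n, cc g n ∈ tup Y (Psum g (n + 1))
  | 0 => by
      have := (g 0).hb
      rwa [show Psum g 1 = (g 0).k by rw [Psum_succ, Psum_zero]; omega]
  | n + 1 => by
      rw [Psum_succ]
      exact tup_append (cc_mem_tup g n) (g (n + 1)).hb

lemma cc_length (g : ℕ → MStar X Y) (n : ℕ) : (cc g n).length = Psum g (n + 1) :=
  (cc_mem_tup g n).1

lemma slice_cc (g : ℕ → MStar X Y) : ∀ n m, m ≤ n → slice g m (cc g n) = (g m).b
  | 0, 0, _ => by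
      show ((g 0).b.drop (Psum g 0)).take ((g 0).k) = (g 0).b
      rw [Psum_zero, List.drop_zero, List.take_of_length_le (le_of_eq (g 0).hb.1)]
  | n + 1, m, hm => by
      rcases Nat.lt_or_ge m (n + 1) with hlt | hge
      · show ((cc g n ++ (g (n + 1)).b).drop (Psum g m)).take ((g m).k) = (g m).b
        rw [List.drop_append_of_le_length (by rw [cc_length]; exact Psum_le g (le_of_lt hlt)),
          List.take_append_of_le_length ?_]
        · exact slice_cc g n m (by omega)
        · rw [List.length_drop, cc_length]
          have h1 := Psum_succ g m
          have h2 := Psum_le g (show m + 1 ≤ n + 1 by omega)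
          omega
      · have hm1 : m = n + 1 := by omega
        subst hm1
        show ((cc g n ++ (g (n + 1)).b).drop (Psum g (n + 1))).take ((g (n + 1)).k)
          = (g (n + 1)).b
        rw [List.drop_left' (cc_length g n),
          List.take_of_length_le (le_of_eq (g (n + 1)).hb.1)]

lemma slice_take (g : ℕ → MStar X Y) {m Q : ℕ} (l : List ZFSet)
    (hQ : Psum g (m + 1) ≤ Q) : slice g m (l.take Q) = slice g m l := by
  have h1 := Psum_succ g m
  show ((l.take Q).drop (Psum g m)).take ((g m).k) = (l.drop (Psum g m)).take ((g m).k)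
  rw [List.drop_take, List.take_take, Nat.min_def]
  split <;> first | rfl | omega

lemma slice_prefix (g : ℕ → MStar X Y) {m : ℕ} {l₁ l₂ : List ZFSet}
    (hpre : l₁ <+: l₂) (hlen : Psum g (m + 1) ≤ l₁.length) :
    slice g m l₁ = slice g m l₂ := by
  obtain ⟨t, rfl⟩ := hpre
  have h1 := Psum_succ g m
  show (l₁.drop (Psum g m)).take ((g m).k) = ((l₁ ++ t).drop (Psum g m)).take ((g m).k)
  rw [List.drop_append_of_le_length (by omega),
    List.take_append_of_le_length (by rw [List.length_drop]; omega)]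

lemma cc_mem_hCset {h : Set (List ZFSet) → Set (List ZFSet)} (hh : IsPHom X Y h)
    (g : ℕ → MStar X Y) (hmem : ∀ n, memStar X Y h (g (n + 1)) (g n)) :
    ∀ n, cc g n ∈ h (Cset g n)
  | 0 => by
      show cc g 0 ∈ h (tup X (Psum g 1))
      rw [hh.map_const]
      exact cc_mem_tup g 0
  | n + 1 => by
      have hP1 : Psum g (n + 1) + (g (n + 1)).k = Psum g (n + 2) := (Psum_succ g (n + 1)).symm
      have hP0 : Psum g n + (g n).k = Psum g (n + 1) := (Psum_succ g n).symm
      have hle : Psum g (n + 1) ≤ Psum g (n + 2) := Psum_le g (by omega)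
      have hsub₁ : ProjInv X (Psum g (n + 2)) (seg 0 (Psum g (n + 1))) (Cset g n)
          ⊆ finTup X := fun l hl => tup_subset_finTup hl.1
      have hsub₂ : ProjInv X (Psum g (n + 2))
          (seg (Psum g (n + 1)) ((g (n + 1)).k) ++ seg (Psum g n) ((g n).k)) (Sset g n)
          ⊆ finTup X := fun l hl => tup_subset_finTup hl.1
      show cc g (n + 1) ∈ h (_ ∩ _)
      rw [hh.map_inter _ hsub₁ _ hsub₂,
        hh.map_projInv (Psum g (n + 1)) (Psum g (n + 2)) _ (seg_length 0 (Psum g (n + 1)))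
          (fun i hi => by have := seg_lt hi; omega) _ (Cset_subset g n),
        hh.map_projInv ((g (n + 1)).k + (g n).k) (Psum g (n + 2)) _
          (by rw [List.length_append, seg_length, seg_length])
          (fun i hi => by
            rcases List.mem_append.1 hi with hi | hi <;> have := seg_lt hi <;> omega)
          _ (Sset_subset g n)]
      have hcc : cc g (n + 1) ∈ tup Y (Psum g (n + 2)) := cc_mem_tup g (n + 1)
      have hcclen : (cc g (n + 1)).length = Psum g (n + 2) := hcc.1
      constructor
      · refine ⟨hcc, ?_⟩
        rw [proj_seg 0 (Psum g (n + 1)) _ (by omega), List.drop_zero]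
        show (cc g n ++ (g (n + 1)).b).take (Psum g (n + 1)) ∈ h (Cset g n)
        rw [List.take_left' (cc_length g n)]
        exact cc_mem_hCset hh g hmem n
      · refine ⟨hcc, ?_⟩
        rw [proj_append, proj_seg _ _ _ (by omega), proj_seg _ _ _ (by omega)]
        have e1 : ((cc g (n + 1)).drop (Psum g (n + 1))).take ((g (n + 1)).k)
            = (g (n + 1)).b := slice_cc g (n + 1) (n + 1) le_rfl
        have e2 : ((cc g (n + 1)).drop (Psum g n)).take ((g n).k)
            = (g n).b := slice_cc g (n + 1) n (by omega)
        rw [e1, e2]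
        exact hmem n

lemma slice_length (g : ℕ → MStar X Y) {n m : ℕ} {l : List ZFSet}
    (hl : l.length = Psum g (n + 1)) (hm : m ≤ n) : (slice g m l).length = (g m).k := by
  have h1 := Psum_succ g m
  have h2 := Psum_le g (show m + 1 ≤ n + 1 by omega)
  simp only [slice, List.length_take, List.length_drop, hl]
  omega

lemma Cset_chain (g : ℕ → MStar X Y) :
    ∀ n, ∀ l ∈ Cset g n, ∀ m, m < n →
      (g (m + 1)).f (slice g (m + 1) l) ∈ (g m).f (slice g m l)
  | 0 => by intro l _ m hm; omega
  | n + 1 => by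
      rintro l ⟨⟨hltup, hproj₁⟩, ⟨-, hproj₂⟩⟩ m hm
      have hllen : l.length = Psum g (n + 2) := hltup.1
      have hP1 : Psum g (n + 1) + (g (n + 1)).k = Psum g (n + 2) := (Psum_succ g (n + 1)).symm
      have hP0 : Psum g n + (g n).k = Psum g (n + 1) := (Psum_succ g n).symm
      rcases Nat.lt_or_ge m n with hlt | hge
      · -- use induction hypothesis on the prefix
        rw [proj_seg 0 (Psum g (n + 1)) l (by omega), List.drop_zero] at hproj₁
        have := Cset_chain g n _ hproj₁ m hlt
        rwa [slice_take g _ (Psum_le g (by omega)),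
          slice_take g _ (Psum_le g (by omega))] at this
      · have hm1 : m = n := by omega
        subst hm1
        rw [proj_append, proj_seg _ _ _ (by omega), proj_seg _ _ _ (by omega)] at hproj₂
        obtain ⟨a₁, h₁, a₂, h₂, heq, hfa⟩ := hproj₂
        have hlen₁ : (slice g (m + 1) l).length = a₁.length := by
          rw [slice_length g hllen le_rfl, h₁.1]
        obtain ⟨e₁, e₂⟩ := List.append_inj heq hlen₁
        show (g (m + 1)).f (slice g (m + 1) l) ∈ (g m).f (slice g m l)
        rw [show slice g (m + 1) l = a₁ from e₁, show slice g m l = a₂ from e₂]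
        exact hfa

lemma main_lemma {h : Set (List ZFSet) → Set (List ZFSet)} (hh : IsPHom X Y h)
    (g : ℕ → MStar X Y) (hk : ∀ n, 1 ≤ (g n).k)
    (hmem : ∀ n, memStar X Y h (g (n + 1)) (g n)) : False := by
  have hAsub : (⋃ n, Cset g n) ⊆ finTup X :=
    Set.iUnion_subset fun n => (Cset_subset g n).trans tup_subset_finTup
  have hPsm : StrictMono (Psum g) := strictMono_nat_of_lt_succ fun n => by
    have h1 := Psum_succ g n
    have h2 := hk n
    omega
  have hwfA : WFset (⋃ n, Cset g n) := by
    rintro ⟨d, hdA, hchain⟩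
    choose nn hnn using fun m => Set.mem_iUnion.1 (hdA m)
    have hlen : ∀ m, (d m).length = Psum g (nn m + 1) :=
      fun m => (Cset_subset g (nn m) (hnn m)).1
    have hdlt : ∀ m, (d m).length < (d (m + 1)).length := by
      intro m
      obtain ⟨hp, hne⟩ := hchain m
      rcases lt_or_eq_of_le hp.length_le with hlt | heq
      · exact hlt
      · exact absurd (hp.eq_of_length heq) hne
    have hnnmono : StrictMono nn := strictMono_nat_of_lt_succ fun m => by
      have h1 := hdlt m
      rw [hlen, hlen] at h1
      have := hPsm.lt_iff_lt.1 h1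
      omega
    have hnn_ge : ∀ m, m ≤ nn m := fun m => hnnmono.le_apply
    have key : ∀ j, (g (j + 1)).f (slice g (j + 1) (d (j + 1)))
        ∈ (g j).f (slice g j (d j)) := by
      intro j
      have h1 := Cset_chain g (nn (j + 1)) (d (j + 1)) (hnn (j + 1)) j
        (by have := hnn_ge (j + 1); omega)
      have h2 : slice g j (d j) = slice g j (d (j + 1)) := by
        refine slice_prefix g (hchain j).1 ?_
        rw [hlen]
        exact Psum_le g (by have := hnn_ge j; omega)
      rwa [← h2] at h1
    exact no_descending ZFSet.mem_wf (fun j => (g j).f (slice g j (d j))) key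
  refine hh.map_wf _ hAsub hwfA ⟨cc g, fun n => ?_, fun n => ⟨⟨(g (n + 1)).b, rfl⟩, ?_⟩⟩
  · exact hh.mono hAsub (Set.subset_iUnion (Cset g) n) (cc_mem_hCset hh g hmem n)
  · intro heq
    have h1 := congrArg List.length heq
    rw [cc_length, cc_length, Psum_succ g (n + 1)] at h1
    have := hk (n + 1)
    omega

/-! ### Padding -/

def pad (y₀ : ZFSet) (hy₀ : y₀ ∈ Y) (p : MStar X Y) : MStar X Y :=
  ⟨p.k + 1, p.b ++ [y₀],
    tup_append p.hb ⟨rfl, fun z hz => by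
      rw [List.mem_singleton] at hz; rwa [hz]⟩,
    fun a => p.f a.dropLast⟩

lemma pad_memStar {h : Set (List ZFSet) → Set (List ZFSet)} (hh : IsPHom X Y h)
    {y₀ : ZFSet} (hy₀ : y₀ ∈ Y) {p q : MStar X Y} (hpq : memStar X Y h p q) :
    memStar X Y h (pad y₀ hy₀ p) (pad y₀ hy₀ q) := by
  set k₁ := p.k with hk₁
  set k₂ := q.k with hk₂
  set S : Set (List ZFSet) :=
    {l | ∃ a₁ ∈ tup X p.k, ∃ a₂ ∈ tup X q.k, l = a₁ ++ a₂ ∧ p.f a₁ ∈ q.f a₂} with hS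
  have hkp : (pad y₀ hy₀ p).k = k₁ + 1 := rfl
  have hkq : (pad y₀ hy₀ q).k = k₂ + 1 := rfl
  have hTeq : {l | ∃ a₁ ∈ tup X (pad y₀ hy₀ p).k, ∃ a₂ ∈ tup X (pad y₀ hy₀ q).k,
      l = a₁ ++ a₂ ∧ (pad y₀ hy₀ p).f a₁ ∈ (pad y₀ hy₀ q).f a₂}
      = ProjInv X (k₁ + 1 + (k₂ + 1)) (seg 0 k₁ ++ seg (k₁ + 1) k₂) S := by
    ext l
    constructor
    · rintro ⟨a₁, h₁, a₂, h₂, rfl, hfa⟩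
      rw [hkp] at h₁
      rw [hkq] at h₂
      have hl : a₁ ++ a₂ ∈ tup X (k₁ + 1 + (k₂ + 1)) := tup_append h₁ h₂
      refine ⟨hl, ?_⟩
      rw [proj_append, proj_seg 0 k₁ _ (by rw [hl.1]; omega),
        proj_seg (k₁ + 1) k₂ _ (by rw [hl.1]; omega),
        List.drop_zero, List.take_append_of_le_length (by rw [h₁.1]; omega),
        List.drop_left' h₁.1]
      exact ⟨a₁.dropLast, tup_dropLast h₁, a₂.dropLast, tup_dropLast h₂,
        by rw [dropLast_eq_take_of_tup h₁, dropLast_eq_take_of_tup h₂], hfa⟩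
    · rintro ⟨hl, hproj⟩
      rw [proj_append, proj_seg 0 k₁ _ (by rw [hl.1]; omega),
        proj_seg (k₁ + 1) k₂ _ (by rw [hl.1]; omega), List.drop_zero] at hproj
      obtain ⟨c₁, hc₁, c₂, hc₂, heq, hfa⟩ := hproj
      have hlen₁ : (l.take k₁).length = c₁.length := by
        rw [List.length_take, hl.1, hc₁.1]; omega
      obtain ⟨e₁, e₂⟩ := List.append_inj heq hlen₁
      have hdr : l.drop (k₁ + 1) ∈ tup X (k₂ + 1) := by
        rw [show k₂ + 1 = k₁ + 1 + (k₂ + 1) - (k₁ + 1) by omega]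
        exact tup_drop hl
      refine ⟨l.take (k₁ + 1), by rw [hkp]; exact tup_take hl (by omega),
        l.drop (k₁ + 1), by rw [hkq]; exact hdr,
        (List.take_append_drop (k₁ + 1) l).symm, ?_⟩
      have hd₁ : (l.take (k₁ + 1)).dropLast = l.take k₁ := by
        rw [dropLast_eq_take_of_tup (tup_take hl (by omega)), List.take_take,
          Nat.min_eq_left (by omega)]
      have hd₂ : (l.drop (k₁ + 1)).dropLast = (l.drop (k₁ + 1)).take k₂ :=
        dropLast_eq_take_of_tup hdr
      show p.f (l.take (k₁ + 1)).dropLast ∈ q.f (l.drop (k₁ + 1)).dropLast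
      rw [hd₁, hd₂, e₁, e₂]
      exact hfa
  show (pad y₀ hy₀ p).b ++ (pad y₀ hy₀ q).b ∈ h _
  rw [hTeq, hh.map_projInv (k₁ + k₂) (k₁ + 1 + (k₂ + 1)) _
    (by rw [List.length_append, seg_length, seg_length])
    (fun i hi => by rcases List.mem_append.1 hi with hi | hi <;> have := seg_lt hi <;> omega)
    S (by rintro l ⟨a₁, h₁, a₂, h₂, rfl, -⟩; exact tup_append h₁ h₂)]
  have hb' : (pad y₀ hy₀ p).b ++ (pad y₀ hy₀ q).b ∈ tup Y (k₁ + 1 + (k₂ + 1)) :=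
    tup_append (pad y₀ hy₀ p).hb (pad y₀ hy₀ q).hb
  refine ⟨hb', ?_⟩
  rw [proj_append, proj_seg 0 k₁ _ (by rw [hb'.1]; omega),
    proj_seg (k₁ + 1) k₂ _ (by rw [hb'.1]; omega), List.drop_zero]
  have hpb : (pad y₀ hy₀ p).b = p.b ++ [y₀] := rfl
  have hqb : (pad y₀ hy₀ q).b = q.b ++ [y₀] := rfl
  have e1 : ((pad y₀ hy₀ p).b ++ (pad y₀ hy₀ q).b).take k₁ = p.b := by
    rw [hpb, List.append_assoc, List.take_append_of_le_length (by rw [p.hb.1]),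
      List.take_of_length_le (le_of_eq p.hb.1)]
  have e2 : (((pad y₀ hy₀ p).b ++ (pad y₀ hy₀ q).b).drop (k₁ + 1)).take k₂ = q.b := by
    rw [hpb, hqb, List.drop_left' (by rw [List.length_append, p.hb.1]; simp [hk₁]),
      List.take_append_of_le_length (by rw [q.hb.1]),
      List.take_of_length_le (le_of_eq q.hb.1)]
  rw [e1, e2]
  exact hpq

/-- Let `h : 𝒫_X → 𝒫_Y` be a homomorphism of 𝒫-structures (in particular `h`
preserves `⊆` and the well-foundedness predicate `WF`). Then the membership relation
`∈*` of the term model `M*` is well-founded: there is no sequence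
`⟨(kₙ, bₙ, fₙ) : n⟩` in `M*` with `(k_{n+1}, b_{n+1}, f_{n+1}) ∈* (kₙ, bₙ, fₙ)`
for all `n`. -/
theorem memStar_wellFounded (X Y : ZFSet) (h : Set (List ZFSet) → Set (List ZFSet))
    (hh : IsPHom X Y h) :
    ¬ ∃ g : ℕ → MStar X Y, ∀ n, memStar X Y h (g (n + 1)) (g n) := by
  rintro ⟨g, hg⟩
  by_cases hY : ∃ y : ZFSet, y ∈ Y
  · obtain ⟨y₀, hy₀⟩ := hY
    exact main_lemma hh (fun n => pad y₀ hy₀ (g n))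
      (fun n => by show 1 ≤ (g n).k + 1; omega)
      (fun n => pad_memStar hh hy₀ (hg n))
  · have hb0 : ∀ n, (g n).b = [] := by
      intro n
      by_contra hne
      obtain ⟨x, t, hxt⟩ := List.exists_cons_of_ne_nil hne
      exact hY ⟨x, (g n).hb.2 x (by rw [hxt]; exact List.mem_cons_self)⟩
    have hk0 : ∀ n, (g n).k = 0 := by
      intro n
      have h1 := (g n).hb.1
      rw [hb0 n] at h1
      simpa using h1.symm
    have hchain : ∀ n, (g (n + 1)).f [] ∈ (g n).f [] := by
      intro n
      have h1 := hg n
      by_contra hcon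
      have hSempty : {l | ∃ a₁ ∈ tup X (g (n + 1)).k, ∃ a₂ ∈ tup X (g n).k,
          l = a₁ ++ a₂ ∧ (g (n + 1)).f a₁ ∈ (g n).f a₂} = (∅ : Set (List ZFSet)) := by
        refine Set.eq_empty_iff_forall_notMem.2 ?_
        rintro l ⟨a₁, h₁, a₂, h₂, rfl, hfa⟩
        rw [hk0 (n + 1)] at h₁
        rw [hk0 n] at h₂
        rw [mem_tup_zero h₁, mem_tup_zero h₂] at hfa
        exact hcon hfa
      rw [memStar, hSempty, hh.map_empty] at h1
      exact h1
    exact no_descending ZFSet.mem_wf (fun n => (g n).f []) hchain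


end WVP
end

section
/- Let h : 𝒫_X → 𝒫_Y be a homomorphism of 𝒫-structures and assume Łoś's theorem for the term model M*. Then the map j*(p) = (0, ⟨⟩, c_p), where c_p is the constant function on the empty tuple with value p, is an elementary embedding from (V, ∈, =) into (M*, ∈*, =*): for every formula φ(v₁,…,v_n) and all p₁,…,p_n ∈ V, V ⊨ φ[p₁,…,p_n] iff M* ⊨ φ[j*(p₁),…,j*(p_n)]. The proof uses h(∅) = ∅ and h(X⁰) = Y⁰ = {⟨⟩}. -/
namespace WVP

/-- The map `j* : V → M*`, `p ↦ (0, ⟨⟩, c_p)`, where `c_p` is the constant function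
with value `p`. -/
def jStar (X Y : ZFSet) (p : ZFSet) : MStar X Y :=
  ⟨0, [], ⟨rfl, by simp⟩, fun _ => p⟩

/-- Let `h : 𝒫_X → 𝒫_Y` be a homomorphism of 𝒫-structures and assume Łoś's theorem
for (the interpretations `P` in `V` and `Q` in `M*` of) a formula `φ`. Then `j*` is
elementary with respect to `φ`: for all `p₁,…,pₙ ∈ V`,
`V ⊨ φ[p₁,…,pₙ]` iff `M* ⊨ φ[j*(p₁),…,j*(pₙ)]`. -/
theorem jStar_elementary (X Y : ZFSet) (h : Set (List ZFSet) → Set (List ZFSet))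
    (hh : IsPHom X Y h) (n : ℕ)
    (P : (Fin n → ZFSet) → Prop) (Q : (Fin n → MStar X Y) → Prop)
    (hLos : LosHolds X Y h n P Q) :
    ∀ v : Fin n → ZFSet, P v ↔ Q fun i => jStar X Y (v i) := by
  intro v
  rw [hLos]
  have hb : (List.ofFn fun i => (jStar X Y (v i)).b).flatten = ([] : List ZFSet) := by
    simp [jStar]
  rw [hb]
  have htup0 : tup X 0 = {([] : List ZFSet)} := by
    ext l; simp [tup, List.length_eq_zero_iff]
    exact fun h' => by simp [h']
  have hYtup0 : tup Y 0 = {([] : List ZFSet)} := by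
    ext l; simp [tup, List.length_eq_zero_iff]
    exact fun h' => by simp [h']
  have hSempty : h (∅ : Set (List ZFSet)) = ∅ := by
    have h01 : (tup X 0 ∩ tup X 1 : Set (List ZFSet)) = ∅ := by
      ext l
      simp only [tup, Set.mem_inter_iff, Set.mem_setOf_eq, Set.mem_empty_iff_false, iff_false]
      rintro ⟨⟨h0, -⟩, ⟨h1, -⟩⟩; omega
    have hsub : ∀ k, tup X k ⊆ finTup X := by
      intro k l hl; exact hl.2
    have := hh.map_inter (tup X 0) (hsub 0) (tup X 1) (hsub 1)
    rw [h01] at this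
    rw [this, hh.map_const 0, hh.map_const 1]
    ext l
    simp only [tup, Set.mem_inter_iff, Set.mem_setOf_eq, Set.mem_empty_iff_false, iff_false]
    rintro ⟨⟨h0, -⟩, ⟨h1, -⟩⟩; omega
  by_cases hP : P v
  · have hS : {l | ∃ a : Fin n → List ZFSet, (∀ i, a i ∈ tup X (jStar X Y (v i)).k) ∧
        l = (List.ofFn a).flatten ∧ P fun i => (jStar X Y (v i)).f (a i)}
        = tup X 0 := by
      rw [htup0]
      ext l
      constructor
      · rintro ⟨a, ha, rfl, -⟩
        have : ∀ i, a i = [] := by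
          intro i
          have := ha i
          rw [show (jStar X Y (v i)).k = 0 from rfl, htup0] at this
          exact this
        simp [this]
      · rintro rfl
        refine ⟨fun _ => [], ?_, by simp, hP⟩
        intro i; rw [show (jStar X Y (v i)).k = 0 from rfl, htup0]; rfl
    rw [hS, hh.map_const 0, hYtup0]
    simpa using hP
  · have hS : {l | ∃ a : Fin n → List ZFSet, (∀ i, a i ∈ tup X (jStar X Y (v i)).k) ∧
        l = (List.ofFn a).flatten ∧ P fun i => (jStar X Y (v i)).f (a i)}
        = (∅ : Set (List ZFSet)) := by
      ext l
      simp only [Set.mem_empty_iff_false, iff_false, Set.mem_setOf_eq]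
      rintro ⟨a, ha, rfl, hPa⟩
      exact hP (by
        convert hPa using 1
        rfl)
    rw [hS, hSempty]
    simp [hP]

end WVP
end
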